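/- arXiv:2212.10061 — 4 statements merged into one kernel-verified Lean document; each statement's English description precedes it below -/
import Mathlib

section
/- Let A be a positive semidefinite Hermitian matrix whose nonzero spectrum lies in [λ_min, λ_max] with λ_min > 0. For each integer m ≥ 1 there exists a polynomial P_m of degree m with P_m(0) = 0 such that |√z − P_m(z)| ≤ √λ_max · e^{−m·λ_min/λ_max} for all z ∈ {0} ∪ [λ_min, λ_max]; consequently ‖√A − P_m(A)‖ ≤ √λ_max · e^{−m·λ_min/λ_max} in operator norm. -/
open Matrix
open scoped ComplexOrder

section Aux

noncomputable def cseq : ℕ → ℝ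
  | 0 => 1
  | (j+1) => cseq j * (2*j+1) / (2*j+2)

lemma cseq_pos : ∀ j, 0 < cseq j
  | 0 => one_pos
  | (j+1) => by
      have := cseq_pos j
      unfold cseq
      positivity

lemma cseq_le_one : ∀ j, cseq j ≤ 1
  | 0 => le_refl 1
  | (j+1) => by
      have h1 := cseq_le_one j
      have h2 := (cseq_pos j).le
      unfold cseq
      rw [div_le_one (by positivity)]
      nlinarith

lemma cseq_rec (j : ℕ) : ((j:ℝ)+1) * cseq (j+1) = ((j:ℝ) + 1/2) * cseq j := by
  show ((j:ℝ)+1) * (cseq j * (2*j+1) / (2*j+2)) = _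
  have : (2*(j:ℝ)+2) ≠ 0 := by positivity
  field_simp

/-- convolution identity -/
lemma cseq_conv (n : ℕ) : ∑ k ∈ Finset.range (n+1), cseq k * cseq (n - k) = 1 := by
  induction n with
  | zero => simp [cseq]
  | succ N ih =>
    set S : ℕ → ℝ := fun M => ∑ k ∈ Finset.range (M+1), (k:ℝ) * cseq k * cseq (M - k) with hS
    have hrefl : ∀ M : ℕ, 2 * S M = (M:ℝ) * ∑ k ∈ Finset.range (M+1), cseq k * cseq (M - k) := by
      intro M
      have h1 : S M = ∑ j ∈ Finset.range (M+1), ((M-j:ℕ):ℝ) * cseq (M-j) * cseq j := by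
        rw [hS]
        rw [← Finset.sum_range_reflect (fun j => ((M-j:ℕ):ℝ) * cseq (M-j) * cseq j) (M+1)]
        refine Finset.sum_congr rfl fun j hj => ?_
        have hj' : j ≤ M := Nat.lt_succ_iff.mp (Finset.mem_range.mp hj)
        have e1 : M + 1 - 1 - j = M - j := by omega
        have e2 : M - (M - j) = j := by omega
        rw [e1, e2]
      have h2 : 2 * S M = S M + S M := by ring
      rw [h2]
      nth_rewrite 2 [h1]
      rw [hS, ← Finset.sum_add_distrib, Finset.mul_sum]
      refine Finset.sum_congr rfl fun j hj => ?_
      have hj' : j ≤ M := Nat.lt_succ_iff.mp (Finset.mem_range.mp hj)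
      have : ((M-j:ℕ):ℝ) = (M:ℝ) - j := by
        rw [Nat.cast_sub hj']
      rw [this]
      ring
    have hshift : S (N+1) = S N + (1/2) * ∑ k ∈ Finset.range (N+1), cseq k * cseq (N - k) := by
      show (∑ k ∈ Finset.range (N+1+1), (k:ℝ) * cseq k * cseq (N+1-k)) = _
      rw [Finset.sum_range_succ' (fun k => (k:ℝ) * cseq k * cseq (N + 1 - k)) (N+1)]
      simp only [Nat.cast_zero, zero_mul, zero_mul, add_zero]
      rw [Finset.mul_sum, ← Finset.sum_add_distrib]
      refine Finset.sum_congr rfl fun i hi => ?_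
      have e1 : N + 1 - (i + 1) = N - i := by omega
      rw [e1]
      have : ((i:ℕ)+1 : ℝ) * cseq (i+1) = ((i:ℝ) + 1/2) * cseq i := by
        push_cast
        exact cseq_rec i
      push_cast
      calc ((i:ℝ)+1) * cseq (i+1) * cseq (N-i) = (((i:ℝ)+1) * cseq (i+1)) * cseq (N-i) := by ring
        _ = (((i:ℝ) + 1/2) * cseq i) * cseq (N-i) := by rw [cseq_rec i]
        _ = (i:ℝ) * cseq i * cseq (N-i) + 1/2 * (cseq i * cseq (N-i)) := by ring
    have hA := hrefl (N+1)
    have hB := hrefl N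
    rw [ih] at hB hshift
    push_cast at hA
    have hN1 : ((N:ℝ)+1) ≠ 0 := by positivity
    have goal' : ((N:ℝ)+1) * (∑ k ∈ Finset.range (N+1+1), cseq k * cseq (N+1-k)) = ((N:ℝ)+1) * 1 := by
      rw [← hA]; linarith
    exact mul_left_cancel₀ hN1 goal'
open Finset

/-- generic Cauchy-product comparison -/
lemma prod_eq_conv (e : ℕ → ℝ) (M K : ℕ) {x : ℝ} (hx0 : 0 ≤ x)
    (he : ∀ j, 0 ≤ e j) :
    ((range M ×ˢ range M ⊆ (range K).biUnion antidiagonal) →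
      (∑ j ∈ range M, e j * x^j)^2 ≤ ∑ n ∈ range K, (∑ k ∈ range (n+1), e k * e (n-k)) * x^n)
    ∧ (((range K).biUnion antidiagonal ⊆ range M ×ˢ range M) →
      ∑ n ∈ range K, (∑ k ∈ range (n+1), e k * e (n-k)) * x^n ≤ (∑ j ∈ range M, e j * x^j)^2) := by
  have hdisj : (↑(range K) : Set ℕ).PairwiseDisjoint antidiagonal := by
    intro a _ b _ hab
    simp only [Finset.disjoint_left]
    intro p hpa hpb
    rw [HasAntidiagonal.mem_antidiagonal] at hpa hpb
    exact hab (hpa ▸ hpb.symm ▸ rfl)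
  have hsq : (∑ j ∈ range M, e j * x^j)^2
      = ∑ p ∈ range M ×ˢ range M, (e p.1 * e p.2) * x^(p.1+p.2) := by
    rw [sq, Finset.sum_mul_sum, Finset.sum_product]
    refine Finset.sum_congr rfl fun j _ => Finset.sum_congr rfl fun k _ => ?_
    rw [pow_add]; ring
  have hbi : ∑ p ∈ (range K).biUnion antidiagonal, (e p.1 * e p.2) * x^(p.1+p.2)
      = ∑ n ∈ range K, (∑ k ∈ range (n+1), e k * e (n-k)) * x^n := by
    rw [Finset.sum_biUnion hdisj]
    refine Finset.sum_congr rfl fun n _ => ?_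
    rw [Finset.Nat.sum_antidiagonal_eq_sum_range_succ_mk
      (fun p => (e p.1 * e p.2) * x^(p.1+p.2)) n, Finset.sum_mul]
    refine Finset.sum_congr rfl fun k hk => ?_
    have : k + (n - k) = n := by
      have := Finset.mem_range.mp hk; omega
    simp [this]
  have hnn : ∀ p : ℕ × ℕ, 0 ≤ (e p.1 * e p.2) * x^(p.1+p.2) := fun p => by
    have := he p.1; have := he p.2; positivity
  constructor
  · intro hsub
    rw [hsq, ← hbi]
    exact Finset.sum_le_sum_of_subset_of_nonneg hsub (fun p _ _ => hnn p)
  · intro hsub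
    rw [hsq, ← hbi]
    exact Finset.sum_le_sum_of_subset_of_nonneg hsub (fun p _ _ => hnn p)

lemma geomRangeLe (K : ℕ) {x : ℝ} (hx0 : 0 ≤ x) (hx1 : x < 1) :
    ∑ n ∈ range K, x^n ≤ 1/(1-x) := by
  rw [le_div_iff₀ (by linarith)]
  have := geom_sum_mul x K
  have hxK : 0 ≤ x^K := pow_nonneg hx0 K
  nlinarith [this]

lemma key1 (m : ℕ) {x : ℝ} (hx0 : 0 ≤ x) (hx1 : x < 1) :
    (∑ j ∈ range m, cseq j * x^j)^2 ≤ 1/(1-x) := by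
  have h := (prod_eq_conv cseq m (2*m) hx0 (fun j => (cseq_pos j).le)).1 ?_
  · refine h.trans ?_
    calc ∑ n ∈ range (2*m), (∑ k ∈ range (n+1), cseq k * cseq (n-k)) * x^n
        = ∑ n ∈ range (2*m), x^n := by
          refine Finset.sum_congr rfl fun n _ => by rw [cseq_conv n, one_mul]
      _ ≤ 1/(1-x) := geomRangeLe _ hx0 hx1
  · intro p hp
    simp only [Finset.mem_product, Finset.mem_range] at hp
    simp only [Finset.mem_biUnion, Finset.mem_range, HasAntidiagonal.mem_antidiagonal]
    exact ⟨p.1 + p.2, by omega, rfl⟩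

/-- modified coefficients -/
noncomputable def dseq (m j : ℕ) : ℝ := if j < m then cseq j else 1

lemma dseq_nonneg (m j : ℕ) : 0 ≤ dseq m j := by
  unfold dseq; split
  · exact (cseq_pos j).le
  · exact zero_le_one

lemma cseq_le_dseq (m j : ℕ) : cseq j ≤ dseq m j := by
  unfold dseq; split
  · exact le_refl _
  · exact cseq_le_one j

lemma key2 (m : ℕ) {x : ℝ} (hx0 : 0 ≤ x) (hx1 : x < 1) :
    1/(1-x) ≤ ((∑ j ∈ range m, cseq j * x^j) + x^m/(1-x))^2 := by
  have h1x : (0:ℝ) < 1 - x := by linarith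
  set R : ℝ := (∑ j ∈ range m, cseq j * x^j) + x^m/(1-x) with hR
  have hRnn : 0 ≤ R := by
    have : 0 ≤ ∑ j ∈ range m, cseq j * x^j :=
      Finset.sum_nonneg fun j _ => mul_nonneg (cseq_pos j).le (pow_nonneg hx0 j)
    have : 0 ≤ x^m/(1-x) := div_nonneg (pow_nonneg hx0 m) h1x.le
    positivity
  -- for M ≥ m : partial geom sum ≤ (d-sum)² ≤ R²
  have hstep : ∀ M, m ≤ M → ∑ n ∈ range M, x^n ≤ R^2 := by
    intro M hmM
    have hdle : ∑ j ∈ range M, dseq m j * x^j ≤ R := by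
      have hsplit : ∑ j ∈ range M, dseq m j * x^j
          = (∑ j ∈ range m, cseq j * x^j) + ∑ j ∈ Ico m M, x^j := by
        rw [Finset.range_eq_Ico, ← Finset.sum_Ico_consecutive _ (Nat.zero_le m) hmM,
          ← Finset.range_eq_Ico]
        congr 1
        · refine Finset.sum_congr rfl fun j hj => ?_
          rw [dseq, if_pos (Finset.mem_range.mp hj)]
        · refine Finset.sum_congr rfl fun j hj => ?_
          rw [dseq, if_neg (by simp only [Finset.mem_Ico] at hj; omega), one_mul]
      rw [hsplit, hR]
      gcongr
      rw [Finset.sum_Ico_eq_sum_range]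
      calc ∑ k ∈ range (M - m), x^(m+k) = x^m * ∑ k ∈ range (M-m), x^k := by
            rw [Finset.mul_sum]; exact Finset.sum_congr rfl fun k _ => by rw [pow_add]
        _ ≤ x^m * (1/(1-x)) := by
            have := geomRangeLe (M-m) hx0 hx1
            exact mul_le_mul_of_nonneg_left this (pow_nonneg hx0 m)
        _ = x^m/(1-x) := by ring
    have hdnn : 0 ≤ ∑ j ∈ range M, dseq m j * x^j :=
      Finset.sum_nonneg fun j _ => mul_nonneg (dseq_nonneg m j) (pow_nonneg hx0 j)
    have h2 := (prod_eq_conv (dseq m) M M hx0 (dseq_nonneg m)).2 ?_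
    · calc ∑ n ∈ range M, x^n
          ≤ ∑ n ∈ range M, (∑ k ∈ range (n+1), dseq m k * dseq m (n-k)) * x^n := by
            refine Finset.sum_le_sum fun n _ => ?_
            have : (1:ℝ) ≤ ∑ k ∈ range (n+1), dseq m k * dseq m (n-k) := by
              rw [← cseq_conv n]
              exact Finset.sum_le_sum fun k _ => mul_le_mul (cseq_le_dseq m k)
                (cseq_le_dseq m (n-k)) (cseq_pos (n-k)).le (dseq_nonneg m k)
            nlinarith [pow_nonneg hx0 n]
        _ ≤ (∑ j ∈ range M, dseq m j * x^j)^2 := h2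
        _ ≤ R^2 := by nlinarith
    · intro p hp
      simp only [Finset.mem_biUnion, Finset.mem_range, HasAntidiagonal.mem_antidiagonal] at hp
      obtain ⟨n, hn, hpn⟩ := hp
      simp only [Finset.mem_product, Finset.mem_range]
      omega
  -- limit
  have hgeom : Filter.Tendsto (fun M => ∑ n ∈ range M, x^n) Filter.atTop (nhds (1/(1-x))) := by
    have := (hasSum_geometric_of_lt_one hx0 hx1).tendsto_sum_nat
    simpa [one_div] using this
  refine le_of_tendsto hgeom ?_
  filter_upwards [Filter.eventually_ge_atTop m] with M hM using hstep M hM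


section MatrixHelpers
open Matrix Polynomial
lemma conjMatPow (U D : Matrix (Fin N) (Fin N) ℂ) (hU : star U * U = 1) (hU' : U * star U = 1)
    (n : ℕ) : (U * D * star U)^n = U * D^n * star U := by
  induction n with
  | zero => simp [hU']
  | succ n ih =>
    rw [pow_succ, ih, pow_succ]
    calc U * D ^ n * star U * (U * D * star U)
        = U * D ^ n * (star U * U) * D * star U := by noncomm_ring
      _ = U * (D ^ n * D) * star U := by rw [hU]; noncomm_ring

lemma conjMatAeval (U D : Matrix (Fin N) (Fin N) ℂ) (hU : star U * U = 1) (hU' : U * star U = 1)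
    (p : Polynomial ℂ) : aeval (U * D * star U) p = U * aeval D p * star U := by
  induction p using Polynomial.induction_on' with
  | add p q hp hq => rw [map_add, map_add, hp, hq, mul_add, add_mul]
  | monomial n a =>
    rw [aeval_monomial, aeval_monomial, conjMatPow U D hU hU' n]
    simp only [Algebra.algebraMap_eq_smul_one, smul_mul_assoc, one_mul, mul_smul_comm]

lemma aevalDiag (d : Fin N → ℂ) (p : Polynomial ℂ) :
    aeval (diagonal d) p = diagonal (fun i => p.eval (d i)) := by
  have h := Polynomial.aeval_algHom_apply (Matrix.diagonalAlgHom (R := ℂ) (α := ℂ) (n := Fin N)) d p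
  simp only [Matrix.diagonalAlgHom_apply] at h
  rw [h]
  have h3 : (aeval d) p = fun i => eval (d i) p := by
    funext i
    have h2 := Polynomial.aeval_algHom_apply (Pi.evalAlgHom ℂ (fun _ : Fin N => ℂ) i) d p
    simp only [Pi.evalAlgHom_apply] at h2
    rw [← h2, Polynomial.aeval_def, Polynomial.eval, Algebra.algebraMap_self]
  rw [h3]

lemma normTUnitary (U : Matrix (Fin N) (Fin N) ℂ) (hU : U ∈ Matrix.unitaryGroup (Fin N) ℂ) :
    ‖Matrix.toEuclideanCLM (𝕜 := ℂ) U‖ ≤ 1 := by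
  set a := Matrix.toEuclideanCLM (𝕜 := ℂ) U with ha
  have h1 : star a * a = 1 := by
    rw [ha, ← map_star, ← _root_.map_mul, (Unitary.mem_iff.mp hU).1, _root_.map_one]
  have h2 : ‖a‖ * ‖a‖ = ‖star a * a‖ := (CStarRing.norm_star_mul_self).symm
  rw [h1] at h2
  have h3 : ‖(1 : EuclideanSpace ℂ (Fin N) →L[ℂ] EuclideanSpace ℂ (Fin N))‖ ≤ 1 := by
    rw [ContinuousLinearMap.one_def]
    exact ContinuousLinearMap.norm_id_le
  nlinarith [norm_nonneg a]

lemma normTDiag (d : Fin N → ℂ) (B : ℝ) (hB : 0 ≤ B) (hd : ∀ i, ‖d i‖ ≤ B) :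
    ‖Matrix.toEuclideanCLM (𝕜 := ℂ) (Matrix.diagonal d)‖ ≤ B := by
  refine ContinuousLinearMap.opNorm_le_bound _ hB fun x => ?_
  have hx : x = (WithLp.equiv 2 _).symm ((WithLp.equiv 2 _) x) := rfl
  rw [hx, show ∀ y : Fin N → ℂ, Matrix.toEuclideanCLM (𝕜 := ℂ) (Matrix.diagonal d) ((WithLp.equiv 2 _).symm y)
      = (WithLp.equiv 2 _).symm (Matrix.toLin' (Matrix.diagonal d) y) from fun y => rfl]
  rw [EuclideanSpace.norm_eq, EuclideanSpace.norm_eq]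
  have : B * Real.sqrt (∑ i, ‖(WithLp.equiv 2 _).symm ((WithLp.equiv 2 _) x) i‖^2)
      = Real.sqrt (B^2 * ∑ i, ‖(WithLp.equiv 2 _).symm ((WithLp.equiv 2 _) x) i‖^2) := by
    rw [Real.sqrt_mul (by positivity), Real.sqrt_sq hB]
  rw [this]
  apply Real.sqrt_le_sqrt
  rw [Finset.mul_sum]
  apply Finset.sum_le_sum
  intro i _
  have h1 : ((WithLp.equiv 2 _).symm (Matrix.toLin' (Matrix.diagonal d) ((WithLp.equiv 2 _) x)) :
      EuclideanSpace ℂ (Fin N)) i = d i * ((WithLp.equiv 2 _) x) i := by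
    simp [Matrix.toLin'_apply, Matrix.mulVec_diagonal]
  rw [h1]
  rw [norm_mul, mul_pow]
  have := hd i
  have h2 : (0:ℝ) ≤ ‖((WithLp.equiv 2 _) x) i‖ := norm_nonneg _
  have h3 : ‖d i‖^2 ≤ B^2 := by nlinarith [norm_nonneg (d i)]
  have h4 : ((WithLp.equiv 2 _).symm ((WithLp.equiv 2 _) x) : EuclideanSpace ℂ (Fin N)) i
      = ((WithLp.equiv 2 _) x) i := rfl
  rw [h4]
  nlinarith [sq_nonneg (‖((WithLp.equiv 2 _) x) i‖)]

end MatrixHelpers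

section SqrtBounds
open Finset

lemma sqrt_sub_bounds (m : ℕ) {x : ℝ} (hx0 : 0 ≤ x) (hx1 : x < 1) :
    0 ≤ Real.sqrt (1-x) - (1-x) * (∑ j ∈ range m, cseq j * x^j) ∧
    Real.sqrt (1-x) - (1-x) * (∑ j ∈ range m, cseq j * x^j) ≤ x^m := by
  have h1x : (0:ℝ) < 1 - x := by linarith
  set S : ℝ := ∑ j ∈ range m, cseq j * x^j with hSdef
  set s : ℝ := Real.sqrt (1-x) with hsdef
  have hs0 : 0 ≤ s := Real.sqrt_nonneg _
  have hs2 : s^2 = 1-x := Real.sq_sqrt h1x.le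
  have hS0 : 0 ≤ S :=
    Finset.sum_nonneg fun j _ => mul_nonneg (cseq_pos j).le (pow_nonneg hx0 j)
  have hk1 := key1 m hx0 hx1
  have hk2 := key2 m hx0 hx1
  have hq0 : 0 ≤ x^m/(1-x) := div_nonneg (pow_nonneg hx0 m) h1x.le
  have hinv : (1-x) * (1/(1-x)) = 1 := by field_simp
  clear_value S s
  rw [← hSdef] at hk1 hk2
  constructor
  · have hsS2 : (s*S)^2 ≤ 1 := by nlinarith [mul_le_mul_of_nonneg_left hk1 h1x.le]
    have hsS : s*S ≤ 1 := by
      have := (abs_le_one_iff_mul_self_le_one (a := s*S)).mpr (by nlinarith)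
      calc s*S ≤ |s*S| := le_abs_self _
        _ ≤ 1 := this
    nlinarith [mul_nonneg hs0 (sub_nonneg.mpr hsS)]
  · set T : ℝ := S + x^m/(1-x) with hTdef
    have hT0 : 0 ≤ T := by positivity
    clear_value T
    have hsT2 : 1 ≤ (s*T)^2 := by
      have he : (s*T)^2 = (1-x)*T^2 := by rw [mul_pow, hs2]
      have := mul_le_mul_of_nonneg_left hk2 h1x.le
      linarith
    have hsT : 1 ≤ s*T := by
      rcases le_or_gt 1 (s*T) with hc | hc
      · exact hc
      · exfalso
        have hst0 : 0 ≤ s*T := mul_nonneg hs0 hT0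
        nlinarith
    have h5 : s*(1 - s*S) ≤ s*(s*(x^m/(1-x))) := by
      apply mul_le_mul_of_nonneg_left _ hs0
      have : s*T = s*S + s*(x^m/(1-x)) := by rw [hTdef]; ring
      linarith [hsT, this ▸ hsT]
    have h6 : s^2*(x^m/(1-x)) = x^m := by
      rw [hs2]; field_simp
    nlinarith [h5, h6, hs2]

end SqrtBounds

noncomputable def approxPoly (m : ℕ) (lmax : ℝ) : Polynomial ℝ :=
  Polynomial.C (Real.sqrt lmax)⁻¹ * Polynomial.X *
    ∑ j ∈ Finset.range m, Polynomial.C (cseq j) * (1 - Polynomial.C lmax⁻¹ * Polynomial.X)^j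

lemma approxPoly_natDegree (m : ℕ) (hm : 1 ≤ m) (lmax : ℝ) :
    (approxPoly m lmax).natDegree ≤ m := by
  unfold approxPoly
  refine (Polynomial.natDegree_mul_le).trans ?_
  have h1 : (Polynomial.C (Real.sqrt lmax)⁻¹ * Polynomial.X).natDegree ≤ 1 :=
    (Polynomial.natDegree_mul_le).trans
      (by simp [Polynomial.natDegree_C])
  have h2 : (∑ j ∈ Finset.range m, Polynomial.C (cseq j) *
      (1 - Polynomial.C lmax⁻¹ * Polynomial.X)^j).natDegree ≤ m - 1 := by
    refine Polynomial.natDegree_sum_le_of_forall_le _ _ fun j hj => ?_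
    refine (Polynomial.natDegree_mul_le).trans ?_
    simp only [Polynomial.natDegree_C, zero_add]
    refine (Polynomial.natDegree_pow_le).trans ?_
    have hb : (1 - Polynomial.C lmax⁻¹ * Polynomial.X).natDegree ≤ 1 := by
      refine (Polynomial.natDegree_sub_le _ _).trans ?_
      simp only [Polynomial.natDegree_one]
      refine max_le (Nat.zero_le _) ?_
      exact (Polynomial.natDegree_mul_le).trans (by simp [Polynomial.natDegree_C])
    have hj' : j ≤ m - 1 := by
      have := Finset.mem_range.mp hj; omega
    calc j * (1 - Polynomial.C lmax⁻¹ * Polynomial.X).natDegree ≤ j * 1 :=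
          Nat.mul_le_mul_left _ hb
      _ = j := Nat.mul_one j
      _ ≤ m - 1 := hj'
  calc (Polynomial.C (Real.sqrt lmax)⁻¹ * Polynomial.X).natDegree +
        (∑ j ∈ Finset.range m, Polynomial.C (cseq j) *
          (1 - Polynomial.C lmax⁻¹ * Polynomial.X)^j).natDegree
      ≤ 1 + (m-1) := Nat.add_le_add h1 h2
    _ ≤ m := by omega

lemma approxPoly_eval (m : ℕ) (lmax z : ℝ) :
    (approxPoly m lmax).eval z
      = (Real.sqrt lmax)⁻¹ * z * ∑ j ∈ Finset.range m, cseq j * (1 - lmax⁻¹*z)^j := by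
  unfold approxPoly
  rw [Polynomial.eval_mul, Polynomial.eval_mul, Polynomial.eval_C, Polynomial.eval_X,
    Polynomial.eval_finset_sum]
  congr 1
  refine Finset.sum_congr rfl fun j _ => ?_
  rw [Polynomial.eval_mul, Polynomial.eval_C, Polynomial.eval_pow, Polynomial.eval_sub,
    Polynomial.eval_one, Polynomial.eval_mul, Polynomial.eval_C, Polynomial.eval_X]

lemma scalar_bound (m : ℕ) (hm : 1 ≤ m) (lmin lmax : ℝ) (hmin : 0 < lmin) (hle : lmin ≤ lmax)
    (z : ℝ) (hz : z = 0 ∨ z ∈ Set.Icc lmin lmax) :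
    |Real.sqrt z - (approxPoly m lmax).eval z| ≤
      Real.sqrt lmax * Real.exp (-(m : ℝ) * lmin / lmax) := by
  have hlmax : 0 < lmax := lt_of_lt_of_le hmin hle
  rcases hz with rfl | hz
  · rw [approxPoly_eval]
    simp
    positivity
  · obtain ⟨hz1, hz2⟩ := hz
    have hz0 : 0 < z := lt_of_lt_of_le hmin hz1
    set x : ℝ := 1 - lmax⁻¹ * z with hxdef
    have hx0 : 0 ≤ x := by
      rw [hxdef]
      have : lmax⁻¹ * z ≤ 1 := by
        rw [← div_eq_inv_mul]; exact (div_le_one hlmax).mpr hz2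
      linarith
    have hx1 : x < 1 := by
      have : 0 < lmax⁻¹ * z := by positivity
      rw [hxdef]; linarith
    have h1x : 1 - x = lmax⁻¹ * z := by rw [hxdef]; ring
    have hzeq : z = lmax * (1-x) := by rw [h1x]; field_simp
    have hsplit : Real.sqrt z = Real.sqrt lmax * Real.sqrt (1-x) := by
      rw [hzeq, Real.sqrt_mul hlmax.le]
    have hsq : Real.sqrt lmax * Real.sqrt lmax = lmax := Real.mul_self_sqrt hlmax.le
    have hsl0 : 0 < Real.sqrt lmax := Real.sqrt_pos.mpr hlmax
    have heval : (approxPoly m lmax).eval z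
        = Real.sqrt lmax * ((1-x) * ∑ j ∈ Finset.range m, cseq j * x^j) := by
      rw [approxPoly_eval]
      have hsinv : (Real.sqrt lmax)⁻¹ * lmax = Real.sqrt lmax := by
        rw [← hsq]; field_simp
        rw [Real.sqrt_sq (Real.sqrt_nonneg _)]
      rw [← hxdef, hzeq, ← mul_assoc, hsinv]
      ring
    obtain ⟨hlow, hup⟩ := sqrt_sub_bounds m hx0 hx1
    have hdiff : Real.sqrt z - (approxPoly m lmax).eval z
        = Real.sqrt lmax * (Real.sqrt (1-x) - (1-x) * ∑ j ∈ Finset.range m, cseq j * x^j) := by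
      rw [hsplit, heval]; ring
    rw [hdiff, abs_of_nonneg (by positivity)]
    have hxle : x ≤ 1 - lmin/lmax := by
      rw [hxdef]
      have : lmin/lmax ≤ lmax⁻¹ * z := by
        rw [div_eq_inv_mul]
        exact mul_le_mul_of_nonneg_left hz1 (by positivity)
      linarith
    have hu1 : lmin/lmax ≤ 1 := by
      rw [div_le_one hlmax]; exact hle
    have hstep1 : x^m ≤ (1 - lmin/lmax)^m := pow_le_pow_left₀ hx0 hxle m
    have hstep2 : (1 - lmin/lmax)^m ≤ Real.exp (-(lmin/lmax))^m := by
      apply pow_le_pow_left₀ (by linarith)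
      have := Real.add_one_le_exp (-(lmin/lmax))
      linarith
    have hstep3 : Real.exp (-(lmin/lmax))^m = Real.exp (-(m:ℝ) * lmin / lmax) := by
      rw [← Real.exp_nat_mul]
      congr 1
      ring
    have : Real.sqrt (1-x) - (1-x) * ∑ j ∈ Finset.range m, cseq j * x^j
        ≤ Real.exp (-(m:ℝ) * lmin / lmax) := by
      calc _ ≤ x^m := hup
        _ ≤ (1 - lmin/lmax)^m := hstep1
        _ ≤ Real.exp (-(lmin/lmax))^m := hstep2
        _ = _ := hstep3
    exact mul_le_mul_of_nonneg_left this hsl0.le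

end Aux

/-- Real power of a matrix via the spectral decomposition (junk value `0` if not Hermitian). -/
noncomputable def mpow {N : ℕ} (M : Matrix (Fin N) (Fin N) ℂ) (r : ℝ) :
    Matrix (Fin N) (Fin N) ℂ :=
  if h : M.IsHermitian then
    (h.eigenvectorUnitary : Matrix (Fin N) (Fin N) ℂ) *
      Matrix.diagonal (fun i => ((h.eigenvalues i ^ r : ℝ) : ℂ)) *
      (star (h.eigenvectorUnitary : Matrix (Fin N) (Fin N) ℂ))
  else 0

/-- Polynomial approximation of the matrix square root: if the nonzero spectrum of a
PSD matrix `A` lies in `[λmin, λmax]`, then for each `m ≥ 1` there is a degree-`m`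
polynomial `P` with `P(0) = 0` approximating `√z` up to `√λmax · e^{-m·λmin/λmax}`
on `{0} ∪ [λmin, λmax]`, and hence `‖√A − P(A)‖ ≤ √λmax · e^{-m·λmin/λmax}` in
operator norm. -/
theorem stmt_14 {N : ℕ} (A : Matrix (Fin N) (Fin N) ℂ) (hA : A.PosSemidef)
    (lmin lmax : ℝ) (hmin : 0 < lmin) (hle : lmin ≤ lmax)
    (hspec : ∀ i, hA.1.eigenvalues i = 0 ∨ hA.1.eigenvalues i ∈ Set.Icc lmin lmax)
    (m : ℕ) (hm : 1 ≤ m) :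
    ∃ P : Polynomial ℝ, P.natDegree ≤ m ∧ P.eval 0 = 0 ∧
      (∀ z : ℝ, (z = 0 ∨ z ∈ Set.Icc lmin lmax) →
        |Real.sqrt z - P.eval z| ≤ Real.sqrt lmax * Real.exp (-(m : ℝ) * lmin / lmax)) ∧
      ‖Matrix.toEuclideanCLM (𝕜 := ℂ)
          (mpow A (1/2) - Polynomial.aeval A (P.map (algebraMap ℝ ℂ)))‖ ≤
        Real.sqrt lmax * Real.exp (-(m : ℝ) * lmin / lmax) := by
  set B : ℝ := Real.sqrt lmax * Real.exp (-(m : ℝ) * lmin / lmax) with hBdef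
  have hlmax : 0 < lmax := lt_of_lt_of_le hmin hle
  have hB0 : 0 ≤ B := by positivity
  set P : Polynomial ℝ := approxPoly m lmax with hPdef
  have heval0 : P.eval 0 = 0 := by rw [hPdef, approxPoly_eval]; ring
  refine ⟨P, approxPoly_natDegree m hm lmax, heval0,
    fun z hz => scalar_bound m hm lmin lmax hmin hle z hz, ?_⟩
  -- matrix part
  set q : Polynomial ℂ := P.map (algebraMap ℝ ℂ) with hqdef
  set U : Matrix (Fin N) (Fin N) ℂ := (hA.1.eigenvectorUnitary : Matrix (Fin N) (Fin N) ℂ)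
    with hUdef
  have hUmem : U ∈ Matrix.unitaryGroup (Fin N) ℂ := (hA.1.eigenvectorUnitary).2
  have hU1 : star U * U = 1 := (Unitary.mem_iff.mp hUmem).1
  have hU2 : U * star U = 1 := (Unitary.mem_iff.mp hUmem).2
  have hsd : mpow A (1/2)
      = U * Matrix.diagonal (fun i => ((Real.sqrt (hA.1.eigenvalues i) : ℝ) : ℂ)) * star U := by
    rw [mpow, dif_pos hA.1]
    have : (fun i => ((hA.1.eigenvalues i ^ ((1:ℝ)/2) : ℝ) : ℂ))
        = fun i => ((Real.sqrt (hA.1.eigenvalues i) : ℝ) : ℂ) := by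
      funext i
      rw [Real.sqrt_eq_rpow]
    rw [this]
  have hPmat : Polynomial.aeval A q
      = U * Matrix.diagonal (fun i => ((P.eval (hA.1.eigenvalues i) : ℝ) : ℂ)) * star U := by
    conv_lhs => rw [hA.1.spectral_theorem, Unitary.conjStarAlgAut_apply]
    rw [conjMatAeval _ _ hU1 hU2, aevalDiag]
    have hfun : (fun i => Polynomial.eval ((RCLike.ofReal ∘ hA.1.eigenvalues) i) q)
        = fun i => ((P.eval (hA.1.eigenvalues i) : ℝ) : ℂ) := by
      funext i
      rw [hqdef]
      simp only [Function.comp_apply, RCLike.ofReal_alg]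
      rw [Polynomial.eval_map]
      rw [show (hA.1.eigenvalues i : ℝ) • (1:ℂ) = algebraMap ℝ ℂ (hA.1.eigenvalues i) by
        rw [Algebra.algebraMap_eq_smul_one]]
      rw [Polynomial.eval₂_hom]
      rfl
    rw [hfun]
  set dvec : Fin N → ℂ :=
    fun i => ((Real.sqrt (hA.1.eigenvalues i) - P.eval (hA.1.eigenvalues i) : ℝ) : ℂ) with hdvec
  have hdiff : mpow A (1/2) - Polynomial.aeval A q = U * Matrix.diagonal dvec * star U := by
    have hfun2 : (fun i => (((Real.sqrt (hA.1.eigenvalues i) : ℝ) : ℂ)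
          - ((P.eval (hA.1.eigenvalues i) : ℝ) : ℂ))) = dvec := by
      funext i
      rw [hdvec]
      simp
    rw [hsd, hPmat, ← sub_mul, ← mul_sub, Matrix.diagonal_sub, hfun2]
  rw [hdiff, _root_.map_mul, _root_.map_mul]
  have hnormU : ‖Matrix.toEuclideanCLM (𝕜 := ℂ) U‖ ≤ 1 := normTUnitary U hUmem
  have hnormUs : ‖Matrix.toEuclideanCLM (𝕜 := ℂ) (star U)‖ ≤ 1 :=
    normTUnitary (star U) (Unitary.star_mem hUmem)
  have hnormD : ‖Matrix.toEuclideanCLM (𝕜 := ℂ) (Matrix.diagonal dvec)‖ ≤ B := by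
    apply normTDiag _ B hB0
    intro i
    rw [hdvec]
    rw [Complex.norm_real, Real.norm_eq_abs]
    exact scalar_bound m hm lmin lmax hmin hle _ (hspec i)
  set TU := Matrix.toEuclideanCLM (𝕜 := ℂ) U
  set TD := Matrix.toEuclideanCLM (𝕜 := ℂ) (Matrix.diagonal dvec)
  set TV := Matrix.toEuclideanCLM (𝕜 := ℂ) (star U)
  calc ‖TU * TD * TV‖ ≤ ‖TU * TD‖ * ‖TV‖ := norm_mul_le _ _
    _ ≤ (‖TU‖ * ‖TD‖) * ‖TV‖ :=
        mul_le_mul_of_nonneg_right (norm_mul_le _ _) (norm_nonneg _)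
    _ ≤ (1 * B) * 1 := by
        apply mul_le_mul _ hnormUs (norm_nonneg _) (by positivity)
        exact mul_le_mul hnormU hnormD (norm_nonneg _) zero_le_one
    _ = B := by ring
end

section
/- Let H = Σ_{e∈E} P_e be a frustration-free Hamiltonian on a δ-regular graph G = (V,E), where each P_e is an orthogonal projector. Let γ_loc = min over pairs of intersecting edges e ≠ e' of the spectral gap of P_e + P_{e'}. Then H² ≥ 2(δ−1)·(γ_loc − (1 − 1/(2(δ−1))))·H, and hence the spectral gap of H is at least 2(δ−1)·(γ_loc − (1 − 1/(2(δ−1)))). -/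
open Matrix
open scoped ComplexOrder

/-- The spectral gap of a Hermitian matrix: the infimum of its nonzero eigenvalues
(junk value `0` if not Hermitian or if there are no nonzero eigenvalues). -/
noncomputable def specGap {n : Type*} [Fintype n] [DecidableEq n]
    (M : Matrix n n ℂ) : ℝ :=
  if h : M.IsHermitian then sInf {x : ℝ | (∃ i, h.eigenvalues i = x) ∧ x ≠ 0} else 0

namespace KnabeAux


variable {n : Type*} [Fintype n] [DecidableEq n]

lemma herm_eq_zero {M : Matrix n n ℂ} (hM : M.IsHermitian)
    (h : ∀ i, hM.eigenvalues i = 0) : M = 0 := by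
  have := hM.spectral_theorem
  have hd : diagonal (RCLike.ofReal ∘ hM.eigenvalues) = (0 : Matrix n n ℂ) := by
    ext i j
    by_cases hij : i = j <;> simp [diagonal, hij, h]
  rw [this, hd, map_zero]

lemma projector_posSemidef {M : Matrix n n ℂ} (h1 : M.IsHermitian) (h2 : M * M = M) :
    M.PosSemidef := by
  have : M = Mᴴ * M := by rw [h1.eq, h2]
  rw [this]
  exact posSemidef_conjTranspose_mul_self M

lemma posSemidef_sum {α : Type*} (s : Finset α) (f : α → Matrix n n ℂ)
    (h : ∀ a ∈ s, (f a).PosSemidef) : (∑ a ∈ s, f a).PosSemidef :=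
  Finset.sum_induction f _ (fun _ _ ha hb => ha.add hb) Matrix.PosSemidef.zero h

lemma posSemidef_smul {M : Matrix n n ℂ} (hM : M.PosSemidef) {c : ℝ} (hc : 0 ≤ c) :
    ((c : ℂ) • M).PosSemidef := by
  refine PosSemidef.of_dotProduct_mulVec_nonneg ?_ (fun x => ?_)
  · unfold Matrix.IsHermitian
    rw [conjTranspose_smul, hM.1.eq]
    congr 1
    simp
  · rw [Matrix.smul_mulVec, dotProduct_smul]
    have := hM.dotProduct_mulVec_nonneg x
    exact mul_nonneg (by exact_mod_cast Complex.zero_le_real.mpr hc) this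

lemma posSemidef_sq_sub_smul {M : Matrix n n ℂ} (hM : M.IsHermitian) (c : ℝ)
    (h : ∀ i, c * hM.eigenvalues i ≤ hM.eigenvalues i ^ 2) :
    (M * M - (c : ℂ) • M).PosSemidef := by
  set U : Matrix n n ℂ := (hM.eigenvectorUnitary : Matrix n n ℂ) with hU
  set D : Matrix n n ℂ := diagonal (RCLike.ofReal ∘ hM.eigenvalues) with hD
  have hUU : star U * U = 1 := Matrix.UnitaryGroup.star_mul_self hM.eigenvectorUnitary
  have hspec : M = U * D * star U := hM.spectral_theorem
  have hdiag : D * D - (c : ℂ) • D =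
      diagonal (fun i => ((hM.eigenvalues i ^ 2 - c * hM.eigenvalues i : ℝ) : ℂ)) := by
    rw [hD, diagonal_mul_diagonal, ← diagonal_smul, diagonal_sub]
    apply congrArg diagonal
    funext i
    simp only [Function.comp_apply, Pi.smul_apply, smul_eq_mul, RCLike.ofReal,
      Complex.coe_algebraMap]
    push_cast
    ring
  have key : M * M - (c : ℂ) • M =
      U * diagonal (fun i => ((hM.eigenvalues i ^ 2 - c * hM.eigenvalues i : ℝ) : ℂ)) * Uᴴ := by
    have hMM : M * M = U * (D * D) * star U := by
      conv_lhs => rw [hspec]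
      simp only [Matrix.mul_assoc]
      rw [← Matrix.mul_assoc (star U) U, hUU, Matrix.one_mul]
    have hcM : (c : ℂ) • M = U * ((c : ℂ) • D) * star U := by
      conv_lhs => rw [hspec]
      rw [Matrix.mul_smul, Matrix.smul_mul]
    rw [hMM, hcM, ← Matrix.sub_mul, ← Matrix.mul_sub, hdiag, Matrix.star_eq_conjTranspose]
  rw [key]
  refine (Matrix.PosSemidef.diagonal ?_).mul_mul_conjTranspose_same U
  intro i
  simp only [Pi.zero_apply]
  rw [← Complex.ofReal_zero, Complex.real_le_real]
  linarith [h i]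

lemma quad_of_posSemidef {M : Matrix n n ℂ} (hM : M.IsHermitian) (c : ℝ)
    (h : (M * M - (c : ℂ) • M).PosSemidef) (i : n) :
    c * hM.eigenvalues i ≤ hM.eigenvalues i ^ 2 := by
  set v : n → ℂ := ⇑(hM.eigenvectorBasis i) with hv
  have hv0 : v ≠ 0 := by
    intro hz
    apply hM.eigenvectorBasis.orthonormal.ne_zero i
    ext j
    exact congrFun hz j
  have hMv : M *ᵥ v = ((hM.eigenvalues i : ℂ)) • v := by
    have := hM.mulVec_eigenvectorBasis i
    rw [this]
    ext j
    simp [v, RCLike.real_smul_eq_coe_smul (K := ℂ)]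
  have hmv : (M * M - (c : ℂ) • M) *ᵥ v =
      (((hM.eigenvalues i ^ 2 - c * hM.eigenvalues i : ℝ) : ℂ)) • v := by
    rw [Matrix.sub_mulVec, ← Matrix.mulVec_mulVec, hMv, Matrix.mulVec_smul, hMv,
      Matrix.smul_mulVec, hMv]
    ext j
    simp [smul_smul]
    push_cast
    ring
  have hps := h.dotProduct_mulVec_nonneg v
  rw [hmv, dotProduct_smul] at hps
  have ht : (0 : ℝ) < RCLike.re (dotProduct (star v) v) := by
    have hnn := dotProduct_star_self_nonneg v
    have hne : dotProduct (star v) v ≠ 0 := fun hz => hv0 (dotProduct_star_self_eq_zero.mp hz)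
    have : 0 < dotProduct (star v) v := lt_of_le_of_ne hnn (Ne.symm hne)
    rw [Complex.lt_def] at this
    simpa using this.1
  have hreal : dotProduct (star v) v = ((RCLike.re (dotProduct (star v) v) : ℝ) : ℂ) := by
    have hnn := dotProduct_star_self_nonneg v
    rw [Complex.nonneg_iff] at hnn
    apply Complex.ext <;> simp [hnn.2]
  rw [hreal, smul_eq_mul, ← Complex.ofReal_mul, ← Complex.ofReal_zero, Complex.real_le_real] at hps
  nlinarith [hps, ht]

lemma specGap_nonneg {M : Matrix n n ℂ} (hM : M.PosSemidef) : 0 ≤ specGap M := by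
  rw [specGap, dif_pos hM.1]
  apply Real.sInf_nonneg
  rintro x ⟨⟨i, hi⟩, -⟩
  exact hi ▸ hM.eigenvalues_nonneg i

lemma specGap_le_eigenvalue {M : Matrix n n ℂ} (hM : M.PosSemidef) (i : n)
    (hi : hM.1.eigenvalues i ≠ 0) : specGap M ≤ hM.1.eigenvalues i := by
  rw [specGap, dif_pos hM.1]
  refine csInf_le ⟨0, ?_⟩ ⟨⟨i, rfl⟩, hi⟩
  rintro x ⟨⟨j, hj⟩, -⟩
  exact hj ▸ hM.eigenvalues_nonneg j

lemma psd_add_eq_zero {A B : Matrix n n ℂ} (hA : A.PosSemidef) (hB : B.PosSemidef)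
    (hAB : A + B = 0) : A = 0 := by
  apply herm_eq_zero hA.1
  intro i
  have h1 : 0 ≤ hA.1.eigenvalues i := hA.eigenvalues_nonneg i
  have hAeq : A = -B := by linear_combination (norm := abel) hAB
  have key : ∀ x : n → ℂ, RCLike.re (dotProduct (star x) (A *ᵥ x)) ≤ 0 := by
    intro x
    rw [hAeq, Matrix.neg_mulVec, dotProduct_neg, map_neg]
    linarith [hB.re_dotProduct_nonneg x]
  have h2 : hA.1.eigenvalues i ≤ 0 := by
    rw [hA.1.eigenvalues_eq]
    exact key _
  linarith

lemma specGap_zero : specGap (0 : Matrix n n ℂ) = 0 := by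
  have hz : ∀ i, (Matrix.isHermitian_zero (n := n) (α := ℂ)).eigenvalues i = 0 := by
    intro i
    have hmv := (Matrix.isHermitian_zero (n := n) (α := ℂ)).mulVec_eigenvectorBasis i
    rw [Matrix.zero_mulVec] at hmv
    have hv0 : ⇑((Matrix.isHermitian_zero (n := n) (α := ℂ)).eigenvectorBasis i) ≠ 0 := by
      intro hzv
      apply (Matrix.isHermitian_zero (n := n) (α := ℂ)).eigenvectorBasis.orthonormal.ne_zero i
      ext j; exact congrFun hzv j
    rcases smul_eq_zero.mp hmv.symm with h | h
    · exact h
    · exact absurd h hv0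
  rw [specGap, dif_pos Matrix.isHermitian_zero]
  have hset : {x : ℝ | (∃ i, (Matrix.isHermitian_zero (n := n) (α := ℂ)).eigenvalues i = x) ∧ x ≠ 0}
      = (∅ : Set ℝ) := by
    ext x
    simp only [Set.mem_setOf_eq, Set.mem_empty_iff_false, iff_false]
    rintro ⟨⟨i, hi⟩, hx⟩
    subst hi
    exact hx (hz i)
  rw [hset, Real.sInf_empty]



lemma sum_nbr_swap {α β : Type*} [AddCommMonoid β] (E : Finset α)
    (Nb : α → Finset α) (hsub : ∀ a ∈ E, Nb a ⊆ E)
    (hsym : ∀ a ∈ E, ∀ b ∈ E, (b ∈ Nb a ↔ a ∈ Nb b)) (f : α → α → β) :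
    ∑ a ∈ E, ∑ b ∈ Nb a, f a b = ∑ a ∈ E, ∑ b ∈ Nb a, f b a := by
  classical
  have key : ∀ g : α → α → β, ∑ a ∈ E, ∑ b ∈ Nb a, g a b
      = ∑ a ∈ E, ∑ b ∈ E, if b ∈ Nb a then g a b else 0 := fun g =>
    Finset.sum_congr rfl fun a ha => by
      rw [Finset.sum_ite_mem, Finset.inter_eq_right.mpr (hsub a ha)]
  calc ∑ a ∈ E, ∑ b ∈ Nb a, f a b
      = ∑ a ∈ E, ∑ b ∈ E, if b ∈ Nb a then f a b else 0 := key f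
    _ = ∑ b ∈ E, ∑ a ∈ E, if b ∈ Nb a then f a b else 0 := Finset.sum_comm
    _ = ∑ b ∈ E, ∑ a ∈ E, if a ∈ Nb b then f a b else 0 :=
        Finset.sum_congr rfl fun b hb => Finset.sum_congr rfl fun a ha =>
          if_congr (hsym a ha b hb) rfl rfl
    _ = ∑ b ∈ E, ∑ a ∈ Nb b, f a b :=
        Finset.sum_congr rfl fun b hb => by
          rw [Finset.sum_ite_mem, Finset.inter_eq_right.mpr (hsub b hb)]
    _ = ∑ a ∈ E, ∑ b ∈ Nb a, f b a := rfl

lemma card_nbr {V : Type*} [Fintype V] [DecidableEq V]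
    (G : SimpleGraph V) [DecidableRel G.Adj] (δ : ℕ) (hreg : G.IsRegularOfDegree δ)
    (u v : V) (huv : G.Adj u v) (s : Finset (Sym2 V))
    (hs : ∀ e', e' ∈ s ↔ e' ∈ G.edgeFinset ∧ (e' ≠ s(u, v) ∧ ∃ w, w ∈ s(u, v) ∧ w ∈ e')) :
    s.card = 2 * δ - 2 := by
  classical
  have hne : u ≠ v := huv.ne
  have heE : s(u, v) ∈ G.edgeSet := G.mem_edgeSet.mpr huv
  have hfilter : s = (G.incidenceFinset u ∪ G.incidenceFinset v).erase s(u, v) := by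
    ext e'
    rw [hs e']
    simp only [Finset.mem_erase, Finset.mem_union, SimpleGraph.mem_incidenceFinset,
      SimpleGraph.incidenceSet, Set.mem_setOf_eq, SimpleGraph.mem_edgeFinset]
    constructor
    · rintro ⟨hE, hne', w, hw1, hw2⟩
      refine ⟨hne', ?_⟩
      rw [Sym2.mem_iff] at hw1
      rcases hw1 with rfl | rfl
      · exact Or.inl ⟨hE, hw2⟩
      · exact Or.inr ⟨hE, hw2⟩
    · rintro ⟨hne', h⟩
      rcases h with ⟨hE, hu⟩ | ⟨hE, hv⟩
      · exact ⟨hE, hne', u, Sym2.mem_mk_left u v, hu⟩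
      · exact ⟨hE, hne', v, Sym2.mem_mk_right u v, hv⟩
  have hmem_u : s(u, v) ∈ G.incidenceFinset u := by
    rw [SimpleGraph.mem_incidenceFinset]
    exact ⟨heE, Sym2.mem_mk_left u v⟩
  have hinter : G.incidenceFinset u ∩ G.incidenceFinset v = {s(u, v)} := by
    ext e'
    simp only [Finset.mem_inter, SimpleGraph.mem_incidenceFinset,
      SimpleGraph.incidenceSet, Set.mem_setOf_eq, Finset.mem_singleton]
    constructor
    · rintro ⟨⟨hE, hu⟩, ⟨_, hv⟩⟩
      exact (Sym2.mem_and_mem_iff hne).mp ⟨hu, hv⟩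
    · rintro rfl
      exact ⟨⟨heE, Sym2.mem_mk_left u v⟩, ⟨heE, Sym2.mem_mk_right u v⟩⟩
  have hcard : (G.incidenceFinset u ∪ G.incidenceFinset v).card = 2 * δ - 1 := by
    have h := Finset.card_union_add_card_inter (G.incidenceFinset u) (G.incidenceFinset v)
    rw [hinter, Finset.card_singleton, SimpleGraph.card_incidenceFinset_eq_degree,
      SimpleGraph.card_incidenceFinset_eq_degree, hreg u, hreg v] at h
    omega
  rw [hfilter, Finset.card_erase_of_mem (Finset.mem_union_left _ hmem_u), hcard]
  omega

end KnabeAux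

/-- Knabe's finite-size criterion: for a frustration-free Hamiltonian `H = Σ_e P_e`
of commuting-when-disjoint edge projectors on a `δ`-regular graph, with local gap
`γ_loc` over intersecting edge pairs, one has `H² ≥ 2(δ−1)(γ_loc − (1 − 1/(2(δ−1))))·H`
and the spectral gap of `H` is at least `2(δ−1)(γ_loc − (1 − 1/(2(δ−1))))`. -/
theorem stmt_15 {V : Type*} [Fintype V] [DecidableEq V]
    (G : SimpleGraph V) [DecidableRel G.Adj]
    (δ : ℕ) (hδ : 2 ≤ δ) (hreg : G.IsRegularOfDegree δ)
    {N : ℕ} (P : Sym2 V → Matrix (Fin N) (Fin N) ℂ)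
    (hproj : ∀ e ∈ G.edgeFinset, (P e).IsHermitian ∧ P e * P e = P e)
    (hcomm : ∀ e ∈ G.edgeFinset, ∀ e' ∈ G.edgeFinset,
      (¬ ∃ v : V, v ∈ e ∧ v ∈ e') → P e * P e' = P e' * P e)
    (H : Matrix (Fin N) (Fin N) ℂ) (hH : H = ∑ e ∈ G.edgeFinset, P e)
    (hFF : ∃ ψ : Fin N → ℂ, ψ ≠ 0 ∧ ∀ e ∈ G.edgeFinset, (P e).mulVec ψ = 0)
    (γloc : ℝ)
    (hγ : γloc = sInf {g : ℝ | ∃ e ∈ G.edgeFinset, ∃ e' ∈ G.edgeFinset,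
      e ≠ e' ∧ (∃ v : V, v ∈ e ∧ v ∈ e') ∧ g = specGap (P e + P e')}) :
    (H * H - ((2 * ((δ : ℝ) - 1) * (γloc - (1 - 1 / (2 * ((δ : ℝ) - 1)))) : ℝ) : ℂ) • H).PosSemidef ∧
    2 * ((δ : ℝ) - 1) * (γloc - (1 - 1 / (2 * ((δ : ℝ) - 1)))) ≤ specGap H := by
  classical
  -- scalars
  set kR : ℝ := 2 * ((δ : ℝ) - 1) with hkRdef
  have hδR : (2 : ℝ) ≤ (δ : ℝ) := by exact_mod_cast hδ
  have hkR2 : (2 : ℝ) ≤ kR := by rw [hkRdef]; linarith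
  have hkR0 : kR ≠ 0 := by linarith
  set c : ℝ := kR * (γloc - (1 - 1 / kR)) with hcdef
  have hc : c = γloc * kR - kR + 1 := by
    rw [hcdef]; field_simp; ring
  set E := G.edgeFinset with hEdef
  -- basic positivity
  have hP : ∀ e ∈ E, (P e).PosSemidef := fun e he =>
    KnabeAux.projector_posSemidef (hproj e he).1 (hproj e he).2
  have hHpsd : H.PosSemidef := by
    rw [hH]; exact KnabeAux.posSemidef_sum _ _ hP
  have hHherm : H.IsHermitian := hHpsd.1
  -- neighbour and disjoint edge sets
  let Nbr : Sym2 V → Finset (Sym2 V) :=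
    fun e => E.filter (fun e' => e' ≠ e ∧ ∃ v, v ∈ e ∧ v ∈ e')
  let Dis : Sym2 V → Finset (Sym2 V) :=
    fun e => E.filter (fun e' => ¬ ∃ v, v ∈ e ∧ v ∈ e')
  have hself : ∀ e : Sym2 V, ∃ v, v ∈ e ∧ v ∈ e := by
    intro e
    induction e using Sym2.ind with
    | _ x y => exact ⟨x, Sym2.mem_mk_left x y, Sym2.mem_mk_left x y⟩
  have hsub : ∀ a ∈ E, Nbr a ⊆ E := fun a _ => Finset.filter_subset _ _
  have hsym : ∀ a ∈ E, ∀ b ∈ E, (b ∈ Nbr a ↔ a ∈ Nbr b) := by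
    intro a ha b hb
    simp only [Nbr, Finset.mem_filter]
    constructor
    · rintro ⟨_, hne, v, hv1, hv2⟩
      exact ⟨ha, hne.symm, v, hv2, hv1⟩
    · rintro ⟨_, hne, v, hv1, hv2⟩
      exact ⟨hb, hne.symm, v, hv2, hv1⟩
  have hswap : ∀ f : Sym2 V → Sym2 V → Matrix (Fin N) (Fin N) ℂ,
      ∑ a ∈ E, ∑ b ∈ Nbr a, f a b = ∑ a ∈ E, ∑ b ∈ Nbr a, f b a :=
    fun f => KnabeAux.sum_nbr_swap E Nbr hsub hsym f
  -- splitting the inner sum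
  have hsplit : ∀ e ∈ E, ∀ f : Sym2 V → Matrix (Fin N) (Fin N) ℂ,
      ∑ e' ∈ E, f e' = f e + ∑ e' ∈ Nbr e, f e' + ∑ e' ∈ Dis e, f e' := by
    intro e he f
    have h1 : ∑ e' ∈ E, f e'
        = ∑ e' ∈ E.filter (fun e' => ∃ v, v ∈ e ∧ v ∈ e'), f e' + ∑ e' ∈ Dis e, f e' :=
      (Finset.sum_filter_add_sum_filter_not E _ f).symm
    have h2 : E.filter (fun e' => ∃ v, v ∈ e ∧ v ∈ e') = insert e (Nbr e) := by
      ext e'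
      simp only [Finset.mem_filter, Finset.mem_insert, Nbr]
      constructor
      · rintro ⟨hE', hsh⟩
        by_cases h : e' = e
        · exact Or.inl h
        · exact Or.inr ⟨hE', h, hsh⟩
      · rintro (rfl | ⟨hE', _, hsh⟩)
        · exact ⟨he, hself _⟩
        · exact ⟨hE', hsh⟩
    have h3 : e ∉ Nbr e := by
      simp only [Nbr, Finset.mem_filter]
      rintro ⟨-, hne, -⟩
      exact hne rfl
    rw [h1, h2, Finset.sum_insert h3]
  -- counting
  have hcount : ∀ e ∈ E, (Nbr e).card = 2 * δ - 2 := by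
    intro e
    induction e using Sym2.ind with
    | _ u v =>
      intro he
      have huv : G.Adj u v := G.mem_edgeSet.mp (SimpleGraph.mem_edgeFinset.mp he)
      refine KnabeAux.card_nbr G δ hreg u v huv _ ?_
      intro e'
      simp only [Nbr, Finset.mem_filter, hEdef]
      try tauto
  set κ : ℂ := ((2 * δ - 2 : ℕ) : ℂ) with hκdef
  have hκ : κ = ((kR : ℝ) : ℂ) := by
    rw [hκdef, hkRdef, Nat.cast_sub (by omega : 2 ≤ 2 * δ)]
    push_cast
    ring
  -- the three sums
  set S : Matrix (Fin N) (Fin N) ℂ := ∑ e ∈ E, ∑ e' ∈ Nbr e, P e * P e' with hSdef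
  set T : Matrix (Fin N) (Fin N) ℂ := ∑ e ∈ E, ∑ e' ∈ Dis e, P e * P e' with hTdef
  have hHH : H * H = H + S + T := by
    calc H * H = ∑ e ∈ E, ∑ e' ∈ E, P e * P e' := by
          rw [hH]; exact Finset.sum_mul_sum E E P P
      _ = ∑ e ∈ E, (P e + ∑ e' ∈ Nbr e, P e * P e' + ∑ e' ∈ Dis e, P e * P e') := by
          refine Finset.sum_congr rfl fun e he => ?_
          rw [hsplit e he (fun e' => P e * P e'), (hproj e he).2]
      _ = (∑ e ∈ E, P e) + S + T := by
          rw [hSdef, hTdef]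
          simp only [Finset.sum_add_distrib]
      _ = H + S + T := by rw [← hH]
  have hTpsd : T.PosSemidef := by
    rw [hTdef]
    refine KnabeAux.posSemidef_sum _ _ fun e he => KnabeAux.posSemidef_sum _ _ fun e' he' => ?_
    obtain ⟨he'E, hdisj⟩ := Finset.mem_filter.mp he'
    have hco := hcomm e he e' he'E hdisj
    refine KnabeAux.projector_posSemidef ?_ ?_
    · show (P e * P e')ᴴ = P e * P e'
      rw [conjTranspose_mul, (hproj e' he'E).1.eq, (hproj e he).1.eq]
      exact hco.symm
    · calc P e * P e' * (P e * P e') = P e * (P e' * P e) * P e' := by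
            simp only [Matrix.mul_assoc]
        _ = P e * (P e * P e') * P e' := by rw [hco]
        _ = (P e * P e) * (P e' * P e') := by simp only [Matrix.mul_assoc]
        _ = P e * P e' := by rw [(hproj e he).2, (hproj e' he'E).2]
  -- the local-gap sum
  set W : Matrix (Fin N) (Fin N) ℂ := ∑ e ∈ E, ∑ e' ∈ Nbr e,
      ((P e + P e') * (P e + P e') - (γloc : ℂ) • (P e + P e')) with hWdef
  have hbddγ : BddBelow {g : ℝ | ∃ e ∈ E, ∃ e' ∈ E,
      e ≠ e' ∧ (∃ v, v ∈ e ∧ v ∈ e') ∧ g = specGap (P e + P e')} := by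
    refine ⟨0, ?_⟩
    rintro g ⟨a, ha, b, hb, -, -, rfl⟩
    exact KnabeAux.specGap_nonneg ((hP a ha).add (hP b hb))
  have hWpsd : W.PosSemidef := by
    rw [hWdef]
    refine KnabeAux.posSemidef_sum _ _ fun e he => KnabeAux.posSemidef_sum _ _ fun e' he' => ?_
    obtain ⟨he'E, hne', hshare⟩ := Finset.mem_filter.mp he'
    have hMps : (P e + P e').PosSemidef := (hP e he).add (hP e' he'E)
    have hγle : γloc ≤ specGap (P e + P e') := by
      rw [hγ]
      exact csInf_le hbddγ ⟨e, he, e', he'E, Ne.symm hne', hshare, rfl⟩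
    refine KnabeAux.posSemidef_sq_sub_smul hMps.1 γloc fun i => ?_
    rcases eq_or_ne (hMps.1.eigenvalues i) 0 with h0 | h0
    · rw [h0]; simp
    · have hnn := hMps.eigenvalues_nonneg i
      have hgap := KnabeAux.specGap_le_eigenvalue hMps i h0
      have hpos : 0 < hMps.1.eigenvalues i := lt_of_le_of_ne hnn (Ne.symm h0)
      nlinarith
  -- algebraic identities
  have hA1 : ∑ e ∈ E, ∑ _e' ∈ Nbr e, P e = κ • H := by
    rw [hH, Finset.smul_sum]
    refine Finset.sum_congr rfl fun e he => ?_
    rw [Finset.sum_const, hcount e he, hκdef]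
    exact (Nat.cast_smul_eq_nsmul ℂ _ _).symm
  have hA2 : ∑ e ∈ E, ∑ e' ∈ Nbr e, P e' = κ • H :=
    (hswap fun a b => P b).trans hA1
  have hS' : ∑ e ∈ E, ∑ e' ∈ Nbr e, P e' * P e = S :=
    (hswap fun a b => P b * P a).trans hSdef.symm
  have hexp : ∀ e ∈ E, ∀ e' ∈ Nbr e, (P e + P e') * (P e + P e')
      = P e + P e' + P e * P e' + P e' * P e := by
    intro e he e' he'
    have he'E : e' ∈ E := (Finset.mem_filter.mp he').1
    rw [add_mul, mul_add, mul_add, (hproj e he).2, (hproj e' he'E).2]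
    abel
  have hQ : ∑ e ∈ E, ∑ e' ∈ Nbr e, (P e + P e') * (P e + P e')
      = κ • H + κ • H + S + S := by
    calc ∑ e ∈ E, ∑ e' ∈ Nbr e, (P e + P e') * (P e + P e')
        = ∑ e ∈ E, ∑ e' ∈ Nbr e, (P e + P e' + P e * P e' + P e' * P e) :=
          Finset.sum_congr rfl fun e he => Finset.sum_congr rfl fun e' he' => hexp e he e' he'
      _ = (∑ e ∈ E, ∑ e' ∈ Nbr e, P e) + (∑ e ∈ E, ∑ e' ∈ Nbr e, P e')
          + (∑ e ∈ E, ∑ e' ∈ Nbr e, P e * P e') + (∑ e ∈ E, ∑ e' ∈ Nbr e, P e' * P e) := by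
          simp only [Finset.sum_add_distrib]
      _ = κ • H + κ • H + S + S := by rw [hA1, hA2, ← hSdef, hS']
  have hL : ∑ e ∈ E, ∑ e' ∈ Nbr e, (P e + P e') = κ • H + κ • H := by
    calc ∑ e ∈ E, ∑ e' ∈ Nbr e, (P e + P e')
        = (∑ e ∈ E, ∑ e' ∈ Nbr e, P e) + (∑ e ∈ E, ∑ e' ∈ Nbr e, P e') := by
          simp only [Finset.sum_add_distrib]
      _ = κ • H + κ • H := by rw [hA1, hA2]
  have hWeq : W = (κ • H + κ • H + S + S) - (γloc : ℂ) • (κ • H + κ • H) := by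
    rw [hWdef]
    rw [show ∑ e ∈ E, ∑ e' ∈ Nbr e,
        ((P e + P e') * (P e + P e') - (γloc : ℂ) • (P e + P e'))
      = (∑ e ∈ E, ∑ e' ∈ Nbr e, (P e + P e') * (P e + P e'))
        - (γloc : ℂ) • (∑ e ∈ E, ∑ e' ∈ Nbr e, (P e + P e')) by
      simp only [Finset.sum_sub_distrib, Finset.smul_sum]]
    rw [hQ, hL]
  -- key identity
  have hkey : H * H - (c : ℂ) • H = T + (((2 : ℝ)⁻¹ : ℝ) : ℂ) • W := by
    rw [hHH, hWeq, hκ, hc]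
    push_cast
    module
  have hpart1 : (H * H - (c : ℂ) • H).PosSemidef := by
    rw [hkey]
    exact hTpsd.add (KnabeAux.posSemidef_smul hWpsd (by norm_num))
  refine ⟨hpart1, ?_⟩
  -- spectral gap bound
  have hquad := KnabeAux.quad_of_posSemidef hHherm c hpart1
  rw [specGap, dif_pos hHherm]
  by_cases hne : {x : ℝ | (∃ i, hHherm.eigenvalues i = x) ∧ x ≠ 0}.Nonempty
  · refine le_csInf hne ?_
    rintro x ⟨⟨i, rfl⟩, hx0⟩
    have h1 := hHpsd.eigenvalues_nonneg i
    have hpos : 0 < hHherm.eigenvalues i := lt_of_le_of_ne h1 (Ne.symm hx0)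
    nlinarith [hquad i]
  · rw [Set.not_nonempty_iff_eq_empty] at hne
    rw [hne, Real.sInf_empty]
    have hall : ∀ i, hHherm.eigenvalues i = 0 := by
      intro i
      by_contra h0
      have : hHherm.eigenvalues i ∈ ({} : Set ℝ) := hne ▸ ⟨⟨i, rfl⟩, h0⟩
      exact this
    have hH0 : H = 0 := KnabeAux.herm_eq_zero hHherm hall
    have hPzero : ∀ e ∈ E, P e = 0 := by
      intro e he
      refine KnabeAux.psd_add_eq_zero (B := ∑ a ∈ E.erase e, P a) (hP e he)
        (KnabeAux.posSemidef_sum _ _ fun a ha => hP a (Finset.mem_of_mem_erase ha)) ?_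
      rw [Finset.add_sum_erase E P he, ← hH, hH0]
    have hγle0 : γloc ≤ 0 := by
      rcases Finset.eq_empty_or_nonempty E with hEe | ⟨e, he⟩
      · rw [hγ]
        have hset : {g : ℝ | ∃ e ∈ E, ∃ e' ∈ E,
            e ≠ e' ∧ (∃ v, v ∈ e ∧ v ∈ e') ∧ g = specGap (P e + P e')} = ∅ := by
          ext g
          simp only [Set.mem_setOf_eq, Set.mem_empty_iff_false, iff_false]
          rintro ⟨a, ha, -⟩
          rw [hEe] at ha
          exact absurd ha (Finset.notMem_empty a)
        rw [hset, Real.sInf_empty]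
      · have hNbrne : (Nbr e).Nonempty := Finset.card_pos.mp (by rw [hcount e he]; omega)
        obtain ⟨e', he'⟩ := hNbrne
        obtain ⟨he'E, hne', hsh⟩ := Finset.mem_filter.mp he'
        have hsg : specGap (P e + P e') = 0 := by
          rw [hPzero e he, hPzero e' he'E, add_zero]
          exact KnabeAux.specGap_zero
        calc γloc ≤ specGap (P e + P e') := by
              rw [hγ]
              exact csInf_le hbddγ ⟨e, he, e', he'E, Ne.symm hne', hsh, rfl⟩
          _ = 0 := hsg
    nlinarith [hγle0, hkR2, hc]
end

section
/- Let W be the n×n symmetric simple random walk matrix on the cycle, W_{ij} = ½ if j ≡ i±1 (mod n) and 0 otherwise, and let γ₀ > 2γ₁ > 0. Then the positive square root of the circulant matrix γ₀·𝟙 + 2γ₁·W has entries satisfying |(√(γ₀𝟙 + 2γ₁W))_{ij}| ≤ (√γ₀ / (1 − 2γ₁/γ₀)) · (2γ₁/γ₀)^{d(i,j)}, where d(i,j) = min{|i−j|, n−|i−j|} is the cycle distance. -/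
open Set

/-- Coefficients of the binomial series for `√(1+x)`. -/
noncomputable def sqcoef : ℕ → ℝ
  | 0 => 1
  | (k+1) => sqcoef k * ((1/2 - k) / (k+1))

lemma abs_sqcoef_le : ∀ k, |sqcoef k| ≤ 1 := by
  intro k
  induction k with
  | zero => simp [sqcoef]
  | succ k ih =>
    have h1 : |(1/2 - (k:ℝ)) / ((k:ℝ)+1)| ≤ 1 := by
      rw [abs_div, abs_of_pos (by positivity : (0:ℝ) < (k:ℝ)+1)]
      rw [div_le_one (by positivity)]
      rw [abs_le]
      constructor <;> push_cast <;> nlinarith [Nat.cast_nonneg (α := ℝ) k]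
    calc |sqcoef (k+1)| = |sqcoef k| * |(1/2 - (k:ℝ)) / ((k:ℝ)+1)| := by
          rw [sqcoef, abs_mul]
      _ ≤ 1 * 1 := mul_le_mul ih h1 (abs_nonneg _) zero_le_one
      _ = 1 := one_mul 1

lemma sqcoef_rec (k : ℕ) : 2 * ((k:ℝ)+1) * sqcoef (k+1) = (1 - 2*k) * sqcoef k := by
  rw [sqcoef]
  field_simp

lemma summable_sqcoef_pow {x : ℝ} (hx : |x| < 1) :
    Summable (fun k => sqcoef k * x ^ k) := by
  apply Summable.of_norm_bounded (g := fun k => |x| ^ k) (summable_geometric_of_lt_one (abs_nonneg x) hx)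
  intro k
  rw [Real.norm_eq_abs, abs_mul, abs_pow]
  exact mul_le_of_le_one_left (by positivity) (abs_sqcoef_le k)

lemma summable_linear_geom {r : ℝ} (hr0 : 0 ≤ r) (hr : r < 1) :
    Summable (fun k : ℕ => ((k:ℝ)+1) * r ^ k) := by
  have h1 : Summable (fun k : ℕ => (k:ℝ) ^ 1 * r ^ k) :=
    summable_pow_mul_geometric_of_norm_lt_one 1 (by rwa [Real.norm_eq_abs, abs_of_nonneg hr0])
  have h2 : Summable (fun k : ℕ => r ^ k) := summable_geometric_of_lt_one hr0 hr
  have := h1.add h2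
  convert this using 2 with k
  ring

lemma summable_aux {x : ℝ} (hx : |x| < 1) (c : ℕ → ℝ) (C : ℝ)
    (h : ∀ k, |c k| ≤ C * ((k:ℝ)+1)) : Summable fun k => c k * x ^ k := by
  refine Summable.of_norm_bounded (g := fun k => C * (((k:ℝ)+1) * |x| ^ k))
    (((summable_linear_geom (abs_nonneg x) hx).mul_left C).congr (fun k => by ring)) (fun k => ?_)
  rw [Real.norm_eq_abs, abs_mul, abs_pow]
  calc |c k| * |x| ^ k ≤ (C * ((k:ℝ)+1)) * |x| ^ k :=
        mul_le_mul_of_nonneg_right (h k) (by positivity)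
    _ = C * (((k:ℝ)+1) * |x| ^ k) := by ring

noncomputable def sqf (x : ℝ) : ℝ := ∑' k, sqcoef k * x ^ k
noncomputable def sqf' (x : ℝ) : ℝ := ∑' k, (sqcoef (k+1) * ((k:ℝ)+1)) * x ^ k

lemma summable_sqf' {x : ℝ} (hx : |x| < 1) :
    Summable fun k => (sqcoef (k+1) * ((k:ℝ)+1)) * x ^ k := by
  apply summable_aux hx _ 1
  intro k
  rw [abs_mul, one_mul, abs_of_pos (by positivity : (0:ℝ) < (k:ℝ)+1)]
  exact mul_le_of_le_one_left (by positivity) (abs_sqcoef_le (k+1))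

lemma hasDerivAt_sqf {x : ℝ} (hx : |x| < 1) : HasDerivAt sqf (sqf' x) x := by
  set r : ℝ := (|x| + 1) / 2 with hr
  have hrpos : 0 < r := by positivity
  have hr1 : r < 1 := by rw [hr]; linarith
  have hxr : |x| < r := by rw [hr]; linarith
  have hu : Summable (fun k : ℕ => ((k:ℝ)+1) * r ^ k) := summable_linear_geom hrpos.le hr1
  have hub : Summable (fun k : ℕ => (k:ℝ) * r ^ (k-1)) := by
    rw [← summable_nat_add_iff 1]
    exact hu.congr (fun k => by push_cast; ring_nf)
  have hbnd : ∀ (k : ℕ) (y : ℝ), |y| ≤ r →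
      ‖sqcoef k * ((k:ℝ) * y ^ (k-1))‖ ≤ (k:ℝ) * r ^ (k-1) := by
    intro k y hyr
    rw [Real.norm_eq_abs, abs_mul, abs_mul, abs_pow, Nat.abs_cast]
    calc |sqcoef k| * ((k:ℝ) * |y| ^ (k-1)) ≤ 1 * ((k:ℝ) * r ^ (k-1)) := by
          apply mul_le_mul (abs_sqcoef_le k) ?_ (by positivity) zero_le_one
          exact mul_le_mul_of_nonneg_left (pow_le_pow_left₀ (abs_nonneg y) hyr _) (Nat.cast_nonneg k)
      _ = (k:ℝ) * r ^ (k-1) := one_mul _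
  have key := hasDerivAt_tsum_of_isPreconnected (g := fun (k : ℕ) (y : ℝ) => sqcoef k * y ^ k)
    (g' := fun (k : ℕ) (y : ℝ) => sqcoef k * ((k:ℝ) * y ^ (k-1)))
    (u := fun (k : ℕ) => (k:ℝ) * r ^ (k-1)) (t := Set.Ioo (-r) r) (y₀ := 0)
    hub isOpen_Ioo (Convex.isPreconnected (convex_Ioo _ _))
    (fun k y _ => (hasDerivAt_pow k y).const_mul (sqcoef k))
    (fun k y hy => hbnd k y (abs_le.2 ⟨hy.1.le, hy.2.le⟩))
    (Set.mem_Ioo.2 ⟨by linarith, hrpos⟩)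
    (summable_sqcoef_pow (by simp : |(0:ℝ)| < 1))
    (Set.mem_Ioo.2 (abs_lt.1 hxr))
  have hs : Summable (fun k : ℕ => sqcoef k * ((k:ℝ) * x ^ (k-1))) :=
    Summable.of_norm_bounded hub (fun k => hbnd k x hxr.le)
  have heq : (∑' (k : ℕ), sqcoef k * ((k:ℝ) * x ^ (k-1))) = sqf' x := by
    rw [hs.tsum_eq_zero_add]
    simp only [Nat.cast_zero, zero_mul, mul_zero, zero_add, sqf']
    congr 1; funext k
    push_cast
    ring_nf
  rw [heq] at key
  exact key

lemma two_mul_sqf' {x : ℝ} (hx : |x| < 1) : 2 * (1 + x) * sqf' x = sqf x := by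
  set a : ℕ → ℝ := fun k => (sqcoef (k+1) * ((k:ℝ)+1)) * x ^ k with ha
  set b : ℕ → ℝ := fun k => (2 * (k:ℝ) * sqcoef k) * x ^ k with hb
  have hsa : Summable a := summable_sqf' hx
  have hsb : Summable b := by
    apply summable_aux hx _ 2
    intro k
    rw [abs_mul, abs_mul, abs_two, Nat.abs_cast]
    calc 2 * (k:ℝ) * |sqcoef k| ≤ 2 * (k:ℝ) * 1 :=
          mul_le_mul_of_nonneg_left (abs_sqcoef_le k) (by positivity)
      _ ≤ 2 * ((k:ℝ)+1) := by linarith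
  have h2a : Summable (fun k => 2 * a k) := hsa.mul_left 2
  have hb0 : b 0 = 0 := by simp [hb]
  have hshift : (∑' k, b (k+1)) = ∑' k, b k := by
    rw [hsb.tsum_eq_zero_add, hb0, zero_add]
  have hxa : ∀ k, 2 * (1+x) * a k = 2 * a k + b (k+1) := by
    intro k
    simp only [ha, hb]
    push_cast
    ring
  calc 2 * (1 + x) * sqf' x = ∑' k, 2 * (1+x) * a k := by
        rw [sqf', ← tsum_mul_left]
    _ = ∑' k, (2 * a k + b (k+1)) := by exact tsum_congr hxa
    _ = (∑' k, 2 * a k) + ∑' k, b (k+1) :=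
        Summable.tsum_add h2a ((summable_nat_add_iff 1).2 hsb)
    _ = (∑' k, 2 * a k) + ∑' k, b k := by rw [hshift]
    _ = ∑' k, (2 * a k + b k) := (Summable.tsum_add h2a hsb).symm
    _ = ∑' k, sqcoef k * x ^ k := by
        apply tsum_congr
        intro k
        have h := sqcoef_rec k
        simp only [ha, hb]
        linear_combination x ^ k * h
    _ = sqf x := rfl

lemma sqf_zero : sqf 0 = 1 := by
  rw [sqf, tsum_eq_single 0 (fun k hk => by simp [zero_pow hk])]
  simp [sqcoef]

lemma sqf_sq {x : ℝ} (hx : |x| < 1) : sqf x ^ 2 = 1 + x := by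
  set φ : ℝ → ℝ := fun y => sqf y ^ 2 / (1 + y) with hφ
  have hd : ∀ y ∈ Set.Ioo (-1:ℝ) 1, HasDerivAt φ 0 y := by
    intro y hy
    have hy1 : |y| < 1 := abs_lt.2 ⟨hy.1, hy.2⟩
    have h1 : (0:ℝ) < 1 + y := by linarith [hy.1]
    have hf := hasDerivAt_sqf hy1
    have hsq : HasDerivAt (fun z => sqf z ^ 2) (2 * sqf y ^ 1 * sqf' y) y := by
      simpa using hf.fun_pow 2
    have hden : HasDerivAt (fun z : ℝ => 1 + z) 1 y := (hasDerivAt_id y).const_add 1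
    have hdiv := hsq.div hden (ne_of_gt h1)
    refine hdiv.congr_deriv ?_
    have h2 := two_mul_sqf' hy1
    have hnum : 2 * sqf y ^ 1 * sqf' y * (1 + y) - sqf y ^ 2 * 1 = 0 := by
      simp only [pow_one, mul_one]
      linear_combination sqf y * h2
    rw [hnum, zero_div]
  have hdiff : DifferentiableOn ℝ φ (Set.Ioo (-1:ℝ) 1) :=
    fun y hy => (hd y hy).differentiableAt.differentiableWithinAt
  have hx' : x ∈ Set.Ioo (-1:ℝ) 1 := Set.mem_Ioo.2 (abs_lt.1 hx)
  have h0' : (0:ℝ) ∈ Set.Ioo (-1:ℝ) 1 := by constructor <;> norm_num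
  have hconst : φ x = φ 0 := by
    apply (convex_Ioo (-1:ℝ) 1).is_const_of_fderivWithin_eq_zero hdiff ?_ hx' h0'
    intro y hy
    rw [fderivWithin_of_isOpen isOpen_Ioo hy, (hd y hy).hasFDerivAt.fderiv]
    ext z
    simp
  have hφ0 : φ 0 = 1 := by simp [hφ, sqf_zero]
  have h1x : (0:ℝ) < 1 + x := by linarith [(abs_lt.1 hx).1]
  have := hconst.trans hφ0
  rw [hφ] at this
  field_simp at this
  linarith [this]

lemma sqf_pos {x : ℝ} (hx : |x| < 1) : 0 < sqf x := by
  by_contra hneg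
  push_neg at hneg
  have h1x : (0:ℝ) < 1 + x := by linarith [(abs_lt.1 hx).1]
  have hne : sqf x ≠ 0 := by
    intro h
    rw [← sqf_sq hx, h] at h1x
    simp at h1x
  have hlt : sqf x < 0 := lt_of_le_of_ne hneg hne
  have hsub : Set.uIcc (0:ℝ) x ⊆ Set.Ioo (-1:ℝ) 1 := by
    intro y hy
    rw [Set.mem_uIcc] at hy
    rw [Set.mem_Ioo, ← abs_lt]
    rcases hy with ⟨h1, h2⟩ | ⟨h1, h2⟩
    · calc |y| ≤ max |0| |x| := abs_le_max_abs_abs h1 h2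
        _ < 1 := by simpa using hx
    · calc |y| ≤ max |x| |0| := abs_le_max_abs_abs h1 h2
        _ < 1 := by simpa using hx
  have hcont : ContinuousOn sqf (Set.uIcc (0:ℝ) x) := fun y hy =>
    (hasDerivAt_sqf (abs_lt.2 (Set.mem_Ioo.1 (hsub hy)))).continuousAt.continuousWithinAt
  have h0mem : (0:ℝ) ∈ Set.uIcc (sqf 0) (sqf x) := by
    rw [sqf_zero, Set.mem_uIcc]
    right
    exact ⟨hlt.le, zero_le_one⟩
  obtain ⟨c, hc, hfc⟩ := intermediate_value_uIcc hcont h0mem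
  have hc1 : |c| < 1 := abs_lt.2 (Set.mem_Ioo.1 (hsub hc))
  have := sqf_sq hc1
  rw [hfc] at this
  have : c = -1 := by nlinarith
  rw [this] at hc1
  norm_num at hc1

lemma hasSum_sqrt_one_add {x : ℝ} (hx : |x| < 1) :
    HasSum (fun k => sqcoef k * x ^ k) (Real.sqrt (1 + x)) := by
  have h1 : Real.sqrt (1 + x) = sqf x := by
    rw [← sqf_sq hx, Real.sqrt_sq (sqf_pos hx).le]
  rw [h1]
  exact (summable_sqcoef_pow hx).hasSum

open Matrix

/-- Real power of a real symmetric matrix via the spectral decomposition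
(junk value `0` if not symmetric). -/
noncomputable def mpowR {n : ℕ} (M : Matrix (Fin n) (Fin n) ℝ) (r : ℝ) :
    Matrix (Fin n) (Fin n) ℝ :=
  if h : M.IsHermitian then
    (h.eigenvectorUnitary : Matrix (Fin n) (Fin n) ℝ) *
      Matrix.diagonal (fun i => (h.eigenvalues i ^ r : ℝ)) *
      (star (h.eigenvectorUnitary : Matrix (Fin n) (Fin n) ℝ))
  else 0

lemma conjm_pow {m : Type*} [Fintype m] [DecidableEq m] (U D : Matrix m m ℝ)
    (h1 : star U * U = 1) (h2 : U * star U = 1) (k : ℕ) :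
    (U * D * star U) ^ k = U * D ^ k * star U := by
  induction k with
  | zero => rw [pow_zero, pow_zero, Matrix.mul_one, h2]
  | succ k ih =>
    rw [pow_succ, pow_succ, ih]
    have e1 : (U * D ^ k * star U) * (U * D * star U)
        = U * D ^ k * ((star U * U) * (D * star U)) := by
      simp only [Matrix.mul_assoc]
    rw [e1, h1, Matrix.one_mul, ← Matrix.mul_assoc, ← Matrix.mul_assoc]

lemma conj_diag_apply {m : Type*} [Fintype m] [DecidableEq m] (U : Matrix m m ℝ)
    (d : m → ℝ) (i j : m) :
    (U * Matrix.diagonal d * star U) i j = ∑ p, (U i p * d p) * U j p := by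
  rw [Matrix.mul_apply]
  apply Finset.sum_congr rfl
  intro p _
  rw [Matrix.mul_diagonal, Matrix.star_apply, star_trivial]

lemma hasSum_tail_geom {q c : ℝ} (hq0 : 0 ≤ q) (hq1 : q < 1) (d : ℕ) :
    HasSum (fun k : ℕ => if d ≤ k then c * q ^ k else 0) (c * q ^ d * (1 - q)⁻¹) := by
  have hg : HasSum (fun k : ℕ => (c * q ^ d) * q ^ k) ((c * q ^ d) * (1 - q)⁻¹) :=
    (hasSum_geometric_of_lt_one hq0 hq1).mul_left _
  have hinj : Function.Injective (fun k : ℕ => d + k) := fun a b h => by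
    simpa using h
  rw [← Function.Injective.hasSum_iff hinj (fun x hx =>
    if_neg (fun hd => hx ⟨x - d, by simpa using Nat.add_sub_cancel' hd⟩))]
  convert hg using 1
  funext k
  show (if d ≤ d + k then c * q ^ (d + k) else 0) = c * q ^ d * q ^ k
  rw [if_pos (Nat.le_add_right d k), pow_add]
  ring

lemma fin_dist_succ {n : ℕ} [NeZero n] (hn : 3 ≤ n) (a : Fin n) :
    min ((a + 1 : Fin n)).val ((-(a + 1) : Fin n)).val ≤ min a.val ((-a : Fin n)).val + 1 := by
  have h1 : ((1 : Fin n)).val = 1 := by rw [Fin.val_one']; exact Nat.mod_eq_of_lt (by omega)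
  have hv : a.val < n := a.isLt
  have hadd : ((a + 1 : Fin n)).val = (a.val + 1) % n := by rw [Fin.add_def, h1]
  rw [Fin.coe_neg, Fin.coe_neg, hadd]
  rcases Nat.lt_or_ge (a.val + 1) n with h | h
  · rw [Nat.mod_eq_of_lt h, Nat.mod_eq_of_lt (by omega : n - (a.val + 1) < n)]
    rcases Nat.eq_zero_or_pos a.val with h0 | h0
    · rw [h0]
      simp only [Nat.sub_zero, Nat.mod_self]
      omega
    · rw [Nat.mod_eq_of_lt (by omega : n - a.val < n)]
      omega
  · have he : a.val + 1 = n := by omega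
    rw [he, Nat.mod_self, Nat.sub_zero, Nat.mod_self]
    omega

/-- Exponential decay of the entries of the square root of the circulant matrix
`γ₀·𝟙 + 2γ₁·W`, where `W` is the symmetric simple random walk matrix on the `n`-cycle
and `γ₀ > 2γ₁ > 0`: the `(i,j)` entry is bounded by
`(√γ₀/(1 − 2γ₁/γ₀))·(2γ₁/γ₀)^{d(i,j)}` with `d` the cycle distance. -/
theorem stmt_17 {n : ℕ} [NeZero n] (hn : 3 ≤ n) (γ₀ γ₁ : ℝ)
    (hγ₁ : 0 < γ₁) (hγ₀ : 2 * γ₁ < γ₀)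
    (W : Matrix (Fin n) (Fin n) ℝ)
    (hW : W = Matrix.of fun i j => if j = i + 1 ∨ j = i - 1 then (1:ℝ)/2 else 0)
    (i j : Fin n) :
    |mpowR (γ₀ • (1 : Matrix (Fin n) (Fin n) ℝ) + (2 * γ₁) • W) (1/2) i j| ≤
      (Real.sqrt γ₀ / (1 - 2 * γ₁ / γ₀)) *
        (2 * γ₁ / γ₀) ^ (min ((i - j : Fin n).val) ((j - i : Fin n).val)) := by
  subst hW
  set W : Matrix (Fin n) (Fin n) ℝ :=
    Matrix.of fun i j => if j = i + 1 ∨ j = i - 1 then (1:ℝ)/2 else 0 with hW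
  set M : Matrix (Fin n) (Fin n) ℝ := γ₀ • 1 + (2 * γ₁) • W with hM
  have hγ₀pos : (0:ℝ) < γ₀ := by linarith
  set q : ℝ := 2 * γ₁ / γ₀ with hq
  have hq0 : 0 < q := by positivity
  have hq1 : q < 1 := (div_lt_one hγ₀pos).2 hγ₀
  -- basic Fin facts
  have hval1 : ((1 : Fin n)).val = 1 := by
    rw [Fin.val_one']; exact Nat.mod_eq_of_lt (by omega)
  have hvaladd : ∀ a : Fin n, (a + 1 : Fin n).val = if a.val + 1 < n then a.val + 1 else 0 := by
    intro a
    rw [Fin.add_def, hval1]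
    split
    · exact Nat.mod_eq_of_lt ‹_›
    · have : a.val + 1 = n := by have := a.isLt; omega
      simp [this]
  have hne1 : ∀ a : Fin n, a ≠ a + 1 := by
    intro a h
    have hv := congrArg Fin.val h
    rw [hvaladd a] at hv
    have := a.isLt
    split at hv <;> omega
  have hne3 : ∀ a : Fin n, (a + 1 : Fin n) ≠ a - 1 := by
    intro a h
    have h2 : ((a + 1 : Fin n) + 1 : Fin n) = a := by rw [h, sub_add_cancel]
    have hv := congrArg Fin.val h2
    rw [hvaladd (a+1), hvaladd a] at hv
    have h3 := a.isLt
    split at hv <;> split at hv <;> omega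
  have hne2 : ∀ a : Fin n, a ≠ a - 1 := by
    intro a h
    have h2 : (a + 1 : Fin n) = a := by
      conv_lhs => rw [h]
      rw [sub_add_cancel]
    exact hne1 a h2.symm
  -- W facts
  have hWpos : ∀ a b : Fin n, 0 ≤ W a b := by
    intro a b
    rw [hW]
    simp only [Matrix.of_apply]
    split <;> norm_num
  have hWrow : ∀ l : Fin n, ∑ b, W l b = 1 := by
    intro l
    have hsplit : ∀ b : Fin n, W l b =
        (if b = l + 1 then (1:ℝ)/2 else 0) + (if b = l - 1 then (1:ℝ)/2 else 0) := by
      intro b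
      rw [hW]
      simp only [Matrix.of_apply]
      by_cases h1 : b = l + 1
      · by_cases h2 : b = l - 1
        · exact absurd (h1.symm.trans h2) (hne3 l)
        · simp [h1, h2, hne3 l]
      · by_cases h2 : b = l - 1
        · simp [h1, h2, Ne.symm (hne3 l)]
        · simp [h1, h2]
    rw [Finset.sum_congr rfl (fun b _ => hsplit b), Finset.sum_add_distrib]
    rw [Finset.sum_ite_eq' Finset.univ (l+1) (fun _ => (1:ℝ)/2),
        Finset.sum_ite_eq' Finset.univ (l-1) (fun _ => (1:ℝ)/2)]
    simp only [Finset.mem_univ, if_true]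
    norm_num
  have hWpowpos : ∀ (k : ℕ) (a b : Fin n), 0 ≤ (W ^ k) a b := by
    intro k
    induction k with
    | zero => intro a b; rw [pow_zero]; by_cases h : a = b <;>
        simp [Matrix.one_apply, h]
    | succ k ih =>
      intro a b
      rw [pow_succ, Matrix.mul_apply]
      exact Finset.sum_nonneg (fun l _ => mul_nonneg (ih a l) (hWpos l b))
  have hWpowrow : ∀ (k : ℕ) (a : Fin n), ∑ b, (W ^ k) a b = 1 := by
    intro k
    induction k with
    | zero => intro a; simp [Matrix.one_apply]
    | succ k ih =>
      intro a
      rw [pow_succ]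
      simp only [Matrix.mul_apply]
      rw [Finset.sum_comm]
      calc ∑ l, ∑ b, (W ^ k) a l * W l b = ∑ l, (W ^ k) a l * ∑ b, W l b := by
            apply Finset.sum_congr rfl
            intro l _
            rw [Finset.mul_sum]
        _ = ∑ l, (W ^ k) a l := by
            apply Finset.sum_congr rfl
            intro l _
            rw [hWrow l, mul_one]
        _ = 1 := ih a
  have hWpowle : ∀ (k : ℕ) (a b : Fin n), (W ^ k) a b ≤ 1 := by
    intro k a b
    calc (W ^ k) a b ≤ ∑ c, (W ^ k) a c :=
          Finset.single_le_sum (fun c _ => hWpowpos k a c) (Finset.mem_univ b)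
      _ = 1 := hWpowrow k a
  have hWsupp : ∀ (k : ℕ) (a b : Fin n), (W ^ k) a b ≠ 0 →
      min ((a - b : Fin n)).val ((b - a : Fin n)).val ≤ k := by
    intro k
    induction k with
    | zero =>
      intro a b h
      rw [pow_zero] at h
      have hab : a = b := by
        by_contra hne
        exact h (Matrix.one_apply_ne hne)
      subst hab
      simp
    | succ k ih =>
      intro a b h
      rw [pow_succ, Matrix.mul_apply] at h
      obtain ⟨l, _, hl⟩ := Finset.exists_ne_zero_of_sum_ne_zero h
      have h1 : (W ^ k) a l ≠ 0 := fun h' => hl (by rw [h', zero_mul])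
      have h2 : W l b ≠ 0 := fun h' => hl (by rw [h', mul_zero])
      have hbl : b = l + 1 ∨ b = l - 1 := by
        by_contra hc
        exact h2 (by rw [hW]; simp only [Matrix.of_apply]; rw [if_neg hc])
      have hIH := ih a l h1
      rcases hbl with rfl | rfl
      · -- b = l + 1
        have key := fin_dist_succ hn (l - a)
        have e1 : (a - (l + 1) : Fin n) = -((l - a) + 1) := by abel
        have e2 : ((l + 1 : Fin n) - a : Fin n) = (l - a) + 1 := by abel
        have e3 : (a - l : Fin n) = -(l - a) := by abel
        rw [e1, e2]
        rw [e3] at hIH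
        omega
      · -- b = l - 1
        have key := fin_dist_succ hn (a - l)
        have e1 : (a - (l - 1) : Fin n) = (a - l) + 1 := by abel
        have e2 : ((l - 1 : Fin n) - a : Fin n) = -((a - l) + 1) := by abel
        have e3 : (l - a : Fin n) = -(a - l) := by abel
        rw [e1, e2]
        rw [e3] at hIH
        omega
  -- Hermitian
  have hWh : W.IsHermitian := by
    show Wᴴ = W
    ext a b
    rw [Matrix.conjTranspose_apply, star_trivial, hW]
    simp only [Matrix.of_apply]
    apply if_congr _ rfl rfl
    constructor
    · rintro (rfl | rfl)
      · right; rw [add_sub_cancel_right]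
      · left; rw [sub_add_cancel]
    · rintro (rfl | rfl)
      · right; rw [add_sub_cancel_right]
      · left; rw [sub_add_cancel]
  have hMh : M.IsHermitian := by
    show Mᴴ = M
    rw [hM, Matrix.conjTranspose_add, Matrix.conjTranspose_smul, Matrix.conjTranspose_smul,
      Matrix.conjTranspose_one, hWh, star_trivial, star_trivial]
  -- eigenvalue bounds via Gershgorin
  have heig : ∀ p : Fin n, |hMh.eigenvalues p - γ₀| ≤ 2 * γ₁ := by
    intro p
    have hv := hMh.mulVec_eigenvectorBasis p
    have hnorm := hMh.eigenvectorBasis.orthonormal.1 p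
    have hbne : hMh.eigenvectorBasis p ≠ 0 := by
      intro h0
      rw [h0, norm_zero] at hnorm
      norm_num at hnorm
    have hvne : ⇑(hMh.eigenvectorBasis p) ≠ 0 := by
      intro h0
      apply hbne
      ext l
      exact congrFun h0 l
    have heg : Module.End.HasEigenvalue (Matrix.toLin' M) (hMh.eigenvalues p) := by
      apply Module.End.hasEigenvalue_of_hasEigenvector
        (x := ⇑(hMh.eigenvectorBasis p))
      refine ⟨Module.End.mem_eigenspace_iff.2 ?_, hvne⟩
      rw [Matrix.toLin'_apply]
      exact hv
    obtain ⟨k, hk⟩ := eigenvalue_mem_ball heg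
    rw [Metric.mem_closedBall, Real.dist_eq] at hk
    have hMkk : M k k = γ₀ := by
      rw [hM]
      simp only [Matrix.add_apply, Matrix.smul_apply, Matrix.one_apply_eq, smul_eq_mul, mul_one]
      rw [hW]
      simp only [Matrix.of_apply]
      rw [if_neg]
      · ring
      · rintro (h | h)
        · exact hne1 k h
        · exact hne2 k h
    have hsum : ∑ b ∈ Finset.univ.erase k, ‖M k b‖ ≤ 2 * γ₁ := by
      have hMkb : ∀ b : Fin n, b ≠ k → ‖M k b‖ = 2 * γ₁ * W k b := by
        intro b hb
        rw [hM]
        simp only [Matrix.add_apply, Matrix.smul_apply, smul_eq_mul]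
        rw [Matrix.one_apply_ne (Ne.symm hb), mul_zero, zero_add, Real.norm_eq_abs,
          abs_of_nonneg (mul_nonneg (by positivity) (hWpos k b))]
      calc ∑ b ∈ Finset.univ.erase k, ‖M k b‖
          = ∑ b ∈ Finset.univ.erase k, 2 * γ₁ * W k b := by
            apply Finset.sum_congr rfl
            intro b hb
            exact hMkb b (Finset.ne_of_mem_erase hb)
        _ ≤ ∑ b, 2 * γ₁ * W k b := by
            apply Finset.sum_le_sum_of_subset_of_nonneg (Finset.subset_univ _)
            intro b _ _
            exact mul_nonneg (by positivity) (hWpos k b)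
        _ = 2 * γ₁ * ∑ b, W k b := by rw [Finset.mul_sum]
        _ = 2 * γ₁ := by rw [hWrow k, mul_one]
    rw [hMkk] at hk
    exact hk.trans hsum
  -- spectral decomposition pieces
  set U : Matrix (Fin n) (Fin n) ℝ := (hMh.eigenvectorUnitary : Matrix (Fin n) (Fin n) ℝ) with hU
  have hUmem : U ∈ Matrix.unitaryGroup (Fin n) ℝ := SetLike.coe_mem _
  have hUU : U * star U = 1 := (Matrix.mem_unitaryGroup_iff).mp hUmem
  have hsUU : star U * U = 1 := (Matrix.mem_unitaryGroup_iff').mp hUmem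
  have hspec : M = U * Matrix.diagonal hMh.eigenvalues * star U := by
    have h0 := hMh.spectral_theorem
    rwa [RCLike.ofReal_real_eq_id, Function.id_comp] at h0
  have hVeq : q • W = U * Matrix.diagonal (fun p => hMh.eigenvalues p / γ₀ - 1) * star U := by
    have hdd : Matrix.diagonal (fun p => hMh.eigenvalues p / γ₀ - 1)
        = γ₀⁻¹ • Matrix.diagonal hMh.eigenvalues - 1 := by
      ext a b
      rcases eq_or_ne a b with rfl | hab
      · simp [Matrix.sub_apply, Matrix.smul_apply, Matrix.diagonal_apply_eq,
          Matrix.one_apply_eq, div_eq_inv_mul, smul_eq_mul]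
      · simp [Matrix.sub_apply, Matrix.smul_apply, Matrix.diagonal_apply_ne _ hab,
          Matrix.one_apply_ne hab]
    have e1 : U * (γ₀⁻¹ • Matrix.diagonal hMh.eigenvalues - 1) * star U
        = γ₀⁻¹ • (U * Matrix.diagonal hMh.eigenvalues * star U) - U * star U := by
      rw [Matrix.mul_sub, Matrix.sub_mul, Matrix.mul_one, Matrix.mul_smul, Matrix.smul_mul]
    rw [hdd, e1, ← hspec, hUU]
    ext a b
    simp only [Matrix.sub_apply, Matrix.smul_apply, hM, Matrix.add_apply, smul_eq_mul, hq]
    field_simp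
    try ring
  have hVk : ∀ k : ℕ, (q • W) ^ k
      = U * Matrix.diagonal (fun p => (hMh.eigenvalues p / γ₀ - 1) ^ k) * star U := by
    intro k
    rw [hVeq, conjm_pow U _ hsUU hUU, Matrix.diagonal_pow]
    rfl
  have hmp : mpowR M (1/2)
      = U * Matrix.diagonal (fun p => hMh.eigenvalues p ^ ((1:ℝ)/2)) * star U := by
    unfold mpowR
    rw [dif_pos hMh]
  set d : ℕ := min ((i - j : Fin n)).val ((j - i : Fin n)).val with hdist
  set g : ℕ → ℝ := fun k => Real.sqrt γ₀ * sqcoef k * (((q • W) ^ k) i j) with hg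
  have hhs : HasSum g (mpowR M (1/2) i j) := by
    have hterm : ∀ p : Fin n, HasSum
        (fun k => (U i p * (Real.sqrt γ₀ * (sqcoef k * (hMh.eigenvalues p / γ₀ - 1) ^ k))) * U j p)
        ((U i p * (hMh.eigenvalues p ^ ((1:ℝ)/2))) * U j p) := by
      intro p
      have hxq : |hMh.eigenvalues p / γ₀ - 1| ≤ q := by
        have h1 : hMh.eigenvalues p / γ₀ - 1 = (hMh.eigenvalues p - γ₀) / γ₀ := by
          field_simp
        rw [h1, abs_div, abs_of_pos hγ₀pos, hq]
        exact div_le_div_of_nonneg_right (heig p) hγ₀pos.le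
      have hx1 : |hMh.eigenvalues p / γ₀ - 1| < 1 := lt_of_le_of_lt hxq hq1
      have hs0 := (hasSum_sqrt_one_add hx1).mul_left (Real.sqrt γ₀)
      have hval : Real.sqrt γ₀ * Real.sqrt (1 + (hMh.eigenvalues p / γ₀ - 1))
          = hMh.eigenvalues p ^ ((1:ℝ)/2) := by
        rw [← Real.sqrt_mul hγ₀pos.le,
          show γ₀ * (1 + (hMh.eigenvalues p / γ₀ - 1)) = hMh.eigenvalues p by rw [add_sub_cancel]; field_simp,
          Real.sqrt_eq_rpow]
      rw [hval] at hs0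
      exact (hs0.mul_left (U i p)).mul_right (U j p)
    have hall := hasSum_sum (s := Finset.univ) (fun p _ => hterm p)
    have hfun : (fun k : ℕ => ∑ p, (U i p *
        (Real.sqrt γ₀ * (sqcoef k * (hMh.eigenvalues p / γ₀ - 1) ^ k))) * U j p) = g := by
      funext k
      simp only [hg]
      rw [hVk k, conj_diag_apply, Finset.mul_sum]
      apply Finset.sum_congr rfl
      intro p _
      ring
    have hvalue : (∑ p, (U i p * (hMh.eigenvalues p ^ ((1:ℝ)/2))) * U j p)
        = mpowR M (1/2) i j := by
      rw [hmp, conj_diag_apply]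
    rw [hfun, hvalue] at hall
    exact hall
  set B : ℕ → ℝ := fun k => if d ≤ k then Real.sqrt γ₀ * q ^ k else 0 with hB
  have hBsum : HasSum B (Real.sqrt γ₀ * q ^ d * (1 - q)⁻¹) := hasSum_tail_geom hq0.le hq1 d
  have hgB : ∀ k, |g k| ≤ B k := by
    intro k
    by_cases hk : d ≤ k
    · have e : g k = Real.sqrt γ₀ * sqcoef k * (q ^ k * (W ^ k) i j) := by
        simp only [hg]
        rw [smul_pow, Matrix.smul_apply, smul_eq_mul]
      rw [hB]
      simp only [if_pos hk]
      rw [e, abs_mul, abs_mul, abs_of_nonneg (Real.sqrt_nonneg _),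
        abs_of_nonneg (mul_nonneg (pow_nonneg hq0.le k) (hWpowpos k i j))]
      calc Real.sqrt γ₀ * |sqcoef k| * (q ^ k * (W ^ k) i j)
          ≤ Real.sqrt γ₀ * 1 * (q ^ k * 1) := by
            apply mul_le_mul
            · exact mul_le_mul_of_nonneg_left (abs_sqcoef_le k) (Real.sqrt_nonneg _)
            · exact mul_le_mul_of_nonneg_left (hWpowle k i j) (pow_nonneg hq0.le k)
            · exact mul_nonneg (pow_nonneg hq0.le k) (hWpowpos k i j)
            · positivity
        _ = Real.sqrt γ₀ * q ^ k := by ring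
    · have hW0 : (W ^ k) i j = 0 := by
        by_contra h0
        exact hk (hWsupp k i j h0)
      have e : g k = 0 := by
        simp only [hg]
        rw [smul_pow, Matrix.smul_apply, smul_eq_mul, hW0, mul_zero, mul_zero]
      rw [hB]
      simp only [if_neg hk]
      rw [e, abs_zero]
  have hgabs : Summable (fun k => |g k|) :=
    Summable.of_nonneg_of_le (fun k => abs_nonneg _) hgB hBsum.summable
  calc |mpowR M (1/2) i j| = |∑' k, g k| := by rw [hhs.tsum_eq]
    _ ≤ ∑' k, |g k| := by
        simpa [Real.norm_eq_abs] using
          norm_tsum_le_tsum_norm (f := g) (by simpa [Real.norm_eq_abs] using hgabs)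
    _ ≤ ∑' k, B k := Summable.tsum_le_tsum hgB hgabs hBsum.summable
    _ = Real.sqrt γ₀ * q ^ d * (1 - q)⁻¹ := hBsum.tsum_eq
    _ = Real.sqrt γ₀ / (1 - q) * q ^ d := by ring
end

section
/- Let σ be a positive definite state and L(ρ) = d_in(c†ρc − ½{cc†,ρ}) + d_out(cρc† − ½{c†c,ρ}) with d_in, d_out > 0, where c satisfies σcσ^{-1} = e^{ε}c with ε = −log(d_in/d_out) (so σc†σ^{-1} = e^{−ε}c†). Then for any s ∈ [0,1], the similarity-transformed superoperator H = −Γ_s^{-1/2}∘L∘Γ_s^{1/2} equals H(ρ) = −√(d_in·d_out)·(c†ρc + cρc†) + (d_in/2){cc†, ρ} + (d_out/2){c†c, ρ}; in particular H is self-adjoint with respect to the Hilbert–Schmidt inner product and independent of s. -/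
open Matrix
open scoped ComplexOrder

lemma mpow_mul_neg {N : ℕ} {σ : Matrix (Fin N) (Fin N) ℂ} (hσ : σ.PosDef) (t : ℝ) :
    mpow σ t * mpow σ (-t) = 1 := by
  have h := hσ.1
  rw [mpow, mpow, dif_pos h, dif_pos h]
  set U : Matrix (Fin N) (Fin N) ℂ := (h.eigenvectorUnitary : Matrix (Fin N) (Fin N) ℂ)
  have hUU : star U * U = 1 := Unitary.coe_star_mul_self _
  have hUU' : U * star U = 1 := Unitary.coe_mul_star_self _
  calc U * Matrix.diagonal (fun i => ((h.eigenvalues i ^ t : ℝ) : ℂ)) * star U *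
        (U * Matrix.diagonal (fun i => ((h.eigenvalues i ^ (-t) : ℝ) : ℂ)) * star U)
      = U * (Matrix.diagonal (fun i => ((h.eigenvalues i ^ t : ℝ) : ℂ)) *
          ((star U * U) * Matrix.diagonal (fun i => ((h.eigenvalues i ^ (-t) : ℝ) : ℂ)))) * star U := by
        simp only [mul_assoc]
    _ = 1 := by
        rw [hUU, one_mul, diagonal_mul_diagonal]
        have : (fun i => ((h.eigenvalues i ^ t : ℝ) : ℂ) * ((h.eigenvalues i ^ (-t) : ℝ) : ℂ))
            = fun _ => (1 : ℂ) := by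
          funext i
          have hpos := hσ.eigenvalues_pos i
          rw [← Complex.ofReal_mul, ← Real.rpow_add hpos, add_neg_cancel, Real.rpow_zero,
            Complex.ofReal_one]
        rw [this, diagonal_one, mul_one, hUU']

lemma mpow_comm_of_comm {N : ℕ} {σ : Matrix (Fin N) (Fin N) ℂ} (hσ : σ.PosDef)
    {k : ℝ} (hk : 0 < k) {c : Matrix (Fin N) (Fin N) ℂ}
    (hc : σ * c = (k : ℂ) • (c * σ)) (t : ℝ) :
    mpow σ t * c = ((k ^ t : ℝ) : ℂ) • (c * mpow σ t) := by
  have h := hσ.1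
  rw [mpow, dif_pos h]
  set U : Matrix (Fin N) (Fin N) ℂ := (h.eigenvectorUnitary : Matrix (Fin N) (Fin N) ℂ) with hU
  have hUU : star U * U = 1 := Unitary.coe_star_mul_self _
  have hUU' : U * star U = 1 := Unitary.coe_mul_star_self _
  set c' : Matrix (Fin N) (Fin N) ℂ := star U * c * U with hc'
  have hcU : c = U * c' * star U := by
    rw [hc']
    calc c = (U * star U) * c * (U * star U) := by rw [hUU', one_mul, mul_one]
    _ = U * (star U * c * U) * star U := by simp only [mul_assoc]
  set D : ℝ → Matrix (Fin N) (Fin N) ℂ :=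
    fun r => Matrix.diagonal (fun i => ((h.eigenvalues i ^ r : ℝ) : ℂ)) with hD
  -- diagonal relation
  have hspec : σ = U * Matrix.diagonal (RCLike.ofReal ∘ h.eigenvalues) * star U :=
    h.spectral_theorem
  have hdiag : Matrix.diagonal (RCLike.ofReal ∘ h.eigenvalues) * c'
      = (k : ℂ) • (c' * Matrix.diagonal (RCLike.ofReal ∘ h.eigenvalues)) := by
    have h1 : star U * (σ * c) * U = star U * ((k : ℂ) • (c * σ)) * U := by rw [hc]
    rw [hspec] at h1
    calc Matrix.diagonal (RCLike.ofReal ∘ h.eigenvalues) * c'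
        = (star U * U) * Matrix.diagonal (RCLike.ofReal ∘ h.eigenvalues) * (star U * c * U) := by
          rw [hUU, one_mul]
      _ = star U * (U * Matrix.diagonal (RCLike.ofReal ∘ h.eigenvalues) * star U * c) * U := by
          simp only [mul_assoc]
      _ = star U * ((k : ℂ) • (c * (U * Matrix.diagonal (RCLike.ofReal ∘ h.eigenvalues) * star U))) * U := h1
      _ = (k : ℂ) • (star U * c * (U * Matrix.diagonal (RCLike.ofReal ∘ h.eigenvalues)) * (star U * U)) := by
          simp only [Matrix.mul_smul, Matrix.smul_mul, mul_assoc]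
      _ = (k : ℂ) • (c' * Matrix.diagonal (RCLike.ofReal ∘ h.eigenvalues)) := by
          rw [hUU, mul_one, hc']; simp only [mul_assoc]
  rw [show (RCLike.ofReal ∘ h.eigenvalues : Fin N → ℂ) = (fun i => ((h.eigenvalues i : ℝ) : ℂ)) from rfl] at hdiag
  have hDt : D t * c' = ((k ^ t : ℝ) : ℂ) • (c' * D t) := by
    ext i j
    have hij := congrFun (congrFun hdiag i) j
    simp only [Matrix.diagonal_mul, Matrix.mul_diagonal, Matrix.smul_apply, smul_eq_mul,
      Function.comp_apply] at hij
    rw [hD]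
    simp only [Matrix.diagonal_mul, Matrix.mul_diagonal, Matrix.smul_apply, smul_eq_mul]
    by_cases h0 : c' i j = 0
    · simp [h0]
    · have heigC : ((h.eigenvalues i : ℝ) : ℂ) = ((k : ℝ) : ℂ) * ((h.eigenvalues j : ℝ) : ℂ) := by
        have hsub : (((h.eigenvalues i : ℝ) : ℂ) - ((k:ℝ):ℂ) * ((h.eigenvalues j : ℝ):ℂ)) * c' i j = 0 := by
          linear_combination hij
        rcases mul_eq_zero.mp hsub with h1 | h1
        · exact sub_eq_zero.mp h1
        · exact absurd h1 h0
      have heig : h.eigenvalues i = k * h.eigenvalues j := by exact_mod_cast heigC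
      have hrt : h.eigenvalues i ^ t = k ^ t * h.eigenvalues j ^ t := by
        rw [heig, Real.mul_rpow hk.le (hσ.eigenvalues_pos j).le]
      rw [hrt]; push_cast; ring
  calc (U * D t) * star U * c
      = U * (D t * c') * star U := by
        rw [hcU]
        calc (U * D t) * star U * (U * c' * star U)
            = U * (D t * ((star U * U) * c')) * star U := by simp only [mul_assoc]
          _ = U * (D t * c') * star U := by rw [hUU, one_mul]
    _ = ((k ^ t : ℝ) : ℂ) • (U * c' * (D t * star U)) := by
        rw [hDt]; simp only [Matrix.mul_smul, Matrix.smul_mul, mul_assoc]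
    _ = ((k ^ t : ℝ) : ℂ) • (c * ((U * D t) * star U)) := by
        rw [hcU]
        congr 1
        calc U * c' * (D t * star U)
            = U * c' * ((star U * U) * D t * star U) := by rw [hUU, one_mul]
          _ = U * c' * star U * ((U * D t) * star U) := by simp only [mul_assoc]

/-- For the quadratic Lindbladian `L(ρ) = d_in(c†ρc − ½{cc†,ρ}) + d_out(cρc† − ½{c†c,ρ})`
with `σ c σ⁻¹ = e^ε c`, `ε = −log(d_in/d_out)`, the transformed superoperator
`H = −Γ_s^{-1/2} ∘ L ∘ Γ_s^{1/2}` equals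
`ρ ↦ −√(d_in d_out)(c†ρc + cρc†) + (d_in/2){cc†,ρ} + (d_out/2){c†c,ρ}` for every
`s ∈ [0,1]` (so it is independent of `s`), and it is self-adjoint with respect to the
Hilbert–Schmidt inner product. -/
theorem stmt_19 {N : ℕ} (σ : Matrix (Fin N) (Fin N) ℂ) (hσ : σ.PosDef)
    (din dout : ℝ) (hdin : 0 < din) (hdout : 0 < dout)
    (c : Matrix (Fin N) (Fin N) ℂ)
    (hc : σ * c * σ⁻¹ = ((Real.exp (-Real.log (din / dout)) : ℝ) : ℂ) • c)
    (L H : Matrix (Fin N) (Fin N) ℂ → Matrix (Fin N) (Fin N) ℂ)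
    (hL : ∀ ρ, L ρ =
      (din : ℂ) • (cᴴ * ρ * c - (1/2 : ℂ) • (c * cᴴ * ρ + ρ * c * cᴴ)) +
      (dout : ℂ) • (c * ρ * cᴴ - (1/2 : ℂ) • (cᴴ * c * ρ + ρ * cᴴ * c)))
    (hH : ∀ ρ, H ρ =
      -((Real.sqrt (din * dout) : ℝ) : ℂ) • (cᴴ * ρ * c + c * ρ * cᴴ) +
        ((din / 2 : ℝ) : ℂ) • (c * cᴴ * ρ + ρ * c * cᴴ) +
        ((dout / 2 : ℝ) : ℂ) • (cᴴ * c * ρ + ρ * cᴴ * c)) :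
    (∀ s ∈ Set.Icc (0:ℝ) 1, ∀ ρ,
      -(mpow σ (-(1 - s)/2) * L (mpow σ ((1 - s)/2) * ρ * mpow σ (s/2)) *
          mpow σ (-s/2)) = H ρ) ∧
    (∀ A B, Matrix.trace ((H A)ᴴ * B) = Matrix.trace (Aᴴ * H B)) := by
  set k : ℝ := dout / din with hkdef
  have hk : 0 < k := div_pos hdout hdin
  have hexp : Real.exp (-Real.log (din / dout)) = k := by
    rw [Real.exp_neg, Real.exp_log (div_pos hdin hdout), hkdef, inv_div]
  have hσc : σ * c = (k : ℂ) • (c * σ) := by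
    have hinv : σ⁻¹ * σ = 1 := nonsing_inv_mul σ hσ.det_pos.ne'.isUnit
    calc σ * c = (σ * c * σ⁻¹) * σ := by rw [mul_assoc, hinv, mul_one]
      _ = (k : ℂ) • (c * σ) := by rw [hc, hexp, Matrix.smul_mul]
  have hσcH : σ * cᴴ = ((k⁻¹ : ℝ) : ℂ) • (cᴴ * σ) := by
    have h1 := congrArg Matrix.conjTranspose hσc
    simp only [Matrix.conjTranspose_mul, Matrix.conjTranspose_smul, hσ.1.eq,
      Complex.star_def, Complex.conj_ofReal] at h1
    -- h1 : cᴴ * σ = k • (σ * cᴴ)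
    have hkne : ((k : ℝ) : ℂ) ≠ 0 := by exact_mod_cast ne_of_gt hk
    rw [h1]
    rw [smul_smul, ← Complex.ofReal_mul, inv_mul_cancel₀ (ne_of_gt hk), Complex.ofReal_one, one_smul]
  have hC := mpow_comm_of_comm hσ hk hσc
  have hCH := mpow_comm_of_comm hσ (inv_pos.mpr hk) hσcH
  have hC1 : ∀ (t : ℝ) (X : Matrix (Fin N) (Fin N) ℂ),
      mpow σ t * (c * X) = ((k ^ t : ℝ) : ℂ) • (c * (mpow σ t * X)) := by
    intro t X; rw [← mul_assoc, hC t, Matrix.smul_mul, mul_assoc]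
  have hCH1 : ∀ (t : ℝ) (X : Matrix (Fin N) (Fin N) ℂ),
      mpow σ t * (cᴴ * X) = (((k⁻¹) ^ t : ℝ) : ℂ) • (cᴴ * (mpow σ t * X)) := by
    intro t X; rw [← mul_assoc, hCH t, Matrix.smul_mul, mul_assoc]
  have hcol : ∀ (t : ℝ) (X : Matrix (Fin N) (Fin N) ℂ),
      mpow σ (-t) * (mpow σ t * X) = X := by
    intro t X
    rw [← mul_assoc]
    have := mpow_mul_neg hσ (-t)
    rw [neg_neg] at this
    rw [this, one_mul]
  constructor
  · intro s hs ρ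
    rw [hL, hH]
    rw [show -(1-s)/2 = -((1-s)/2) by ring, show -s/2 = -(s/2) by ring]
    simp only [Matrix.mul_add, Matrix.add_mul, Matrix.mul_sub, Matrix.sub_mul,
      Matrix.smul_mul, Matrix.mul_smul, mul_assoc, hC1, hCH1, hcol,
      mpow_mul_neg hσ, mul_one, one_mul, smul_smul]
    have hik : ∀ t : ℝ, (k⁻¹) ^ t = k ^ (-t) := fun t => by
      rw [Real.inv_rpow hk.le, ← Real.rpow_neg hk.le]
    simp only [hik, ← Complex.ofReal_mul, ← Real.rpow_add hk]
    ring_nf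
    have hq : (0:ℝ) < dout * din⁻¹ := by positivity
    have r1 : din * (dout * din⁻¹) ^ ((1:ℝ)/2) = Real.sqrt (dout * din) := by
      rw [← Real.sqrt_eq_rpow]
      have h2 : dout * din = (dout * din⁻¹) * din ^ 2 := by field_simp
      rw [h2, Real.sqrt_mul hq.le, Real.sqrt_sq hdin.le]; ring
    have r2 : dout * (dout * din⁻¹) ^ ((-1:ℝ)/2) = Real.sqrt (dout * din) := by
      rw [show ((-1:ℝ)/2) = -(1/2) by ring, Real.rpow_neg hq.le, ← Real.sqrt_eq_rpow,
        ← Real.sqrt_inv]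
      have h2 : dout * din = (dout * din⁻¹)⁻¹ * dout ^ 2 := by field_simp
      rw [h2, Real.sqrt_mul (by positivity), Real.sqrt_sq hdout.le]; ring
    rw [hkdef, div_eq_mul_inv dout din]
    simp only [Real.rpow_zero, Complex.ofReal_one, one_smul, smul_sub, smul_add, smul_smul,
      ← Complex.ofReal_mul, r1, r2]
    push_cast
    rw [mul_comm dout din]
    module
  · intro A B
    rw [hH, hH]
    simp only [conjTranspose_add, conjTranspose_smul, conjTranspose_mul, conjTranspose_neg,
      conjTranspose_conjTranspose, star_neg, Complex.star_def, Complex.conj_ofReal,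
      add_mul, mul_add, neg_smul, smul_mul_assoc, mul_smul_comm, neg_mul, mul_neg,
      trace_add, trace_smul, trace_neg, mul_assoc]
    have t1 : (cᴴ * (Aᴴ * (c * B))).trace = (Aᴴ * (c * (B * cᴴ))).trace := by
      rw [trace_mul_comm]; simp only [mul_assoc]
    have t2 : (c * (Aᴴ * (cᴴ * B))).trace = (Aᴴ * (cᴴ * (B * c))).trace := by
      rw [trace_mul_comm]; simp only [mul_assoc]
    have t3 : (c * (cᴴ * (Aᴴ * B))).trace = (Aᴴ * (B * (c * cᴴ))).trace := by
      rw [trace_mul_comm]; simp only [mul_assoc]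
      rw [trace_mul_comm]; simp only [mul_assoc]
    have t4 : (cᴴ * (c * (Aᴴ * B))).trace = (Aᴴ * (B * (cᴴ * c))).trace := by
      rw [trace_mul_comm]; simp only [mul_assoc]
      rw [trace_mul_comm]; simp only [mul_assoc]
    rw [t1, t2, t3, t4]
    ring_nf
end
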